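/- arXiv:2405.01339 — 6 statements merged into one kernel-verified Lean document; each statement's English description precedes it below -/
import Mathlib

section
/- There is an absolute constant c > 0 such that for all sufficiently small ε > 0 the following holds. Let n = ⌈ε^{-2}⌉ and let A = {e_1,…,e_n} ⊂ ℝ^n be the standard unit basis vectors. Then every subset Ω ⊆ A equipped with non-negative weights that is an ε-coreset of A for 1-means (k = 1) satisfies |Ω| ≥ c·ε^{-2}. -/
open Finset

noncomputable section

lemma aux_norm_single_sub {n : ℕ} (i : Fin n) (s : EuclideanSpace ℝ (Fin n)) :
    ‖EuclideanSpace.single i (1 : ℝ) - s‖ ^ 2 = 1 - 2 * s i + ∑ j, (s j) ^ 2 := by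
  rw [EuclideanSpace.norm_eq, Real.sq_sqrt (Finset.sum_nonneg fun j _ => by positivity)]
  have hterm : ∀ j : Fin n, ‖(EuclideanSpace.single i (1 : ℝ) - s) j‖ ^ 2
      = (if j = i then (1 : ℝ) - 2 * s j else 0) + (s j) ^ 2 := by
    intro j
    rw [PiLp.sub_apply, EuclideanSpace.single_apply, Real.norm_eq_abs, sq_abs]
    split_ifs <;> ring
  rw [Finset.sum_congr rfl fun j _ => hterm j, Finset.sum_add_distrib,
    Finset.sum_ite_eq' Finset.univ i (fun j => (1 : ℝ) - 2 * s j)]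
  simp

lemma aux_sum_expand {ι : Type*} (F : Finset ι) (c f : ι → ℝ) (t T : ℝ) :
    ∑ i ∈ F, c i * (1 - 2 * (t * f i) + T)
      = (1 + T) * (∑ i ∈ F, c i) - 2 * t * ∑ i ∈ F, c i * f i := by
  rw [Finset.mul_sum, Finset.mul_sum, ← Finset.sum_sub_distrib]
  exact Finset.sum_congr rfl fun i _ => by ring

lemma aux_sum_expand_one {ι : Type*} (F : Finset ι) (f : ι → ℝ) (t T : ℝ) :
    ∑ i ∈ F, (1 - 2 * (t * f i) + T)
      = (1 + T) * (F.card : ℝ) - 2 * t * ∑ i ∈ F, f i := by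
  have := aux_sum_expand F (fun _ => (1 : ℝ)) f t T
  simpa using this

set_option maxHeartbeats 1000000 in
/-- Any 1-means coreset of the `n`-dimensional simplex (standard basis vectors,
`n = ⌈ε^{-2}⌉`) consisting of non-negatively weighted input points must have
size `Ω(ε^{-2})`. -/
theorem simplex_coreset_lower_bound :
    ∃ c : ℝ, 0 < c ∧
      ∃ ε₀ : ℝ, 0 < ε₀ ∧
        ∀ ε : ℝ, 0 < ε → ε < ε₀ →
          ∀ n : ℕ, n = ⌈ε ^ (-2 : ℤ)⌉₊ →
            -- a weighted subset of the standard basis `A = {e_1, …, e_n}`,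
            -- identified with its index set `I`
            ∀ (I : Finset (Fin n)) (w : Fin n → ℝ),
              (∀ i ∈ I, 0 ≤ w i) →
              -- ε-coreset for 1-means: every center `s` has its cost preserved
              (∀ s : EuclideanSpace ℝ (Fin n),
                |(∑ i ∈ I, w i * ‖EuclideanSpace.single i (1 : ℝ) - s‖ ^ 2) -
                    ∑ i : Fin n, ‖EuclideanSpace.single i (1 : ℝ) - s‖ ^ 2|
                  ≤ ε * ∑ i : Fin n, ‖EuclideanSpace.single i (1 : ℝ) - s‖ ^ 2) →
              c * ε ^ (-2 : ℤ) ≤ (I.card : ℝ) := by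
  refine ⟨1/4, by norm_num, 1/10, by norm_num, ?_⟩
  intro ε hε hε10 n hn I w _hw h
  have hzpow : ε ^ (-2 : ℤ) = (ε ^ 2)⁻¹ := by
    rw [zpow_neg, zpow_two, sq]
  have hRpos : (0 : ℝ) < (ε ^ 2)⁻¹ := by positivity
  -- basic bounds on n
  have hnlow : (ε ^ 2)⁻¹ ≤ (n : ℝ) := by
    rw [hn, ← hzpow]; exact Nat.le_ceil _
  have hnhigh : (n : ℝ) ≤ (ε ^ 2)⁻¹ + 1 := by
    rw [hn, ← hzpow]
    exact le_of_lt (Nat.ceil_lt_add_one (by positivity))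
  have hn1 : (1 : ℝ) ≤ (n : ℝ) := by
    have hpos : (0:ℝ) < n := lt_of_lt_of_le hRpos hnlow
    have : 0 < n := by exact_mod_cast hpos
    exact_mod_cast this
  have hε2n : ε ^ 2 * (n : ℝ) ≤ 1 + ε ^ 2 := by
    have h1 := mul_le_mul_of_nonneg_left hnhigh (le_of_lt (by positivity : (0:ℝ) < ε ^ 2))
    calc ε ^ 2 * (n : ℝ) ≤ ε ^ 2 * ((ε ^ 2)⁻¹ + 1) := h1
      _ = 1 + ε ^ 2 := by field_simp
  -- notation
  set m : ℝ := (I.card : ℝ) with hm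
  set W : ℝ := ∑ i ∈ I, w i with hWdef
  set Q : ℝ := ∑ i ∈ I, (1 - w i) ^ 2 with hQdef
  set gf : Fin n → ℝ := fun j => if j ∈ I then 1 - w j else 1 with hgf
  set S : ℝ := ∑ j, gf j with hSdef
  set PI : ℝ := ∑ i ∈ I, w i * gf i with hPIdef
  set G : ℝ := ((n : ℝ) - m) + Q with hGdef
  clear_value m W Q gf S PI G
  have hgf_mem : ∀ j ∈ I, gf j = 1 - w j := by
    intro j hj; simp only [hgf]; rw [if_pos hj]
  have hgf_not : ∀ j ∈ Finset.univ \ I, gf j = 1 := by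
    intro j hj; simp only [hgf]; rw [if_neg (Finset.mem_sdiff.mp hj).2]
  have hcard_le : (I.card : ℕ) ≤ n := by
    simpa using Finset.card_le_univ I
  have hmn : m ≤ (n : ℝ) := by rw [hm]; exact_mod_cast hcard_le
  have hQ0 : 0 ≤ Q := by rw [hQdef]; exact Finset.sum_nonneg fun i _ => sq_nonneg _
  -- split sums over univ
  have hsplit : ∀ f : Fin n → ℝ, ∑ j, f j = ∑ j ∈ Finset.univ \ I, f j + ∑ j ∈ I, f j :=
    fun f => (Finset.sum_sdiff (Finset.subset_univ I)).symm
  have hcard_sdiff : ((Finset.univ \ I).card : ℝ) = (n : ℝ) - m := by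
    rw [Finset.card_sdiff_of_subset (Finset.subset_univ I), Finset.card_univ, Fintype.card_fin,
      Nat.cast_sub hcard_le, hm]
  have hG2 : ∑ j, (gf j) ^ 2 = G := by
    rw [hsplit]
    have h1 : ∑ j ∈ Finset.univ \ I, (gf j) ^ 2 = ∑ j ∈ Finset.univ \ I, (1:ℝ) :=
      Finset.sum_congr rfl fun j hj => by rw [hgf_not j hj]; norm_num
    have h2 : ∑ j ∈ I, (gf j) ^ 2 = Q := by
      rw [hQdef]; exact Finset.sum_congr rfl fun j hj => by rw [hgf_mem j hj]
    rw [h1, h2, Finset.sum_const, nsmul_eq_mul, mul_one, hcard_sdiff, hGdef]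
  have hSP : S - PI = G := by
    have hS1 : S = ((n : ℝ) - m) + ∑ i ∈ I, (1 - w i) := by
      rw [hSdef, hsplit]
      have h1 : ∑ j ∈ Finset.univ \ I, gf j = ∑ j ∈ Finset.univ \ I, (1:ℝ) :=
        Finset.sum_congr rfl fun j hj => hgf_not j hj
      have h2 : ∑ j ∈ I, gf j = ∑ i ∈ I, (1 - w i) :=
        Finset.sum_congr rfl fun j hj => hgf_mem j hj
      rw [h1, h2, Finset.sum_const, nsmul_eq_mul, mul_one, hcard_sdiff]
    have hP1 : PI = ∑ i ∈ I, w i * (1 - w i) := by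
      rw [hPIdef]; exact Finset.sum_congr rfl fun j hj => by rw [hgf_mem j hj]
    rw [hS1, hP1, hGdef, hQdef, add_sub_assoc, ← Finset.sum_sub_distrib]
    congr 1
    exact Finset.sum_congr rfl fun i _ => by ring
  -- coreset at 0 : |W - n| ≤ ε n
  have hH0 : |W - (n : ℝ)| ≤ ε * n := by
    have h0 := h 0
    have hn0 : ∀ i : Fin n, ‖EuclideanSpace.single i (1 : ℝ) - 0‖ ^ 2 = 1 := by
      intro i
      rw [aux_norm_single_sub]
      simp
    rw [Finset.sum_congr rfl (fun i _ => by rw [hn0 i]),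
      Finset.sum_congr rfl (fun i (_ : i ∈ Finset.univ) => hn0 i)] at h0
    simpa [hWdef] using h0
  -- coreset at ± t · g
  have hKey : ∀ t : ℝ, |(W - n) * (1 + t ^ 2 * G) + 2 * t * G|
      ≤ ε * ((1 + t ^ 2 * G) * n - 2 * t * S) := by
    intro t
    have hs := h ((WithLp.equiv 2 (Fin n → ℝ)).symm fun j => t * gf j)
    have happ : ∀ j : Fin n,
        ((WithLp.equiv 2 (Fin n → ℝ)).symm fun j => t * gf j) j = t * gf j := fun j => rfl
    have hT : ∑ j, (((WithLp.equiv 2 (Fin n → ℝ)).symm fun j => t * gf j) j) ^ 2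
        = t ^ 2 * G := by
      rw [Finset.sum_congr rfl fun j _ => by rw [happ j, mul_pow], ← Finset.mul_sum, hG2]
    have hnormi : ∀ i : Fin n,
        ‖EuclideanSpace.single i (1 : ℝ) - (WithLp.equiv 2 (Fin n → ℝ)).symm fun j => t * gf j‖ ^ 2
          = 1 - 2 * (t * gf i) + t ^ 2 * G := by
      intro i
      rw [aux_norm_single_sub, hT, happ]
    rw [Finset.sum_congr rfl (fun i _ => by rw [hnormi i]),
      Finset.sum_congr rfl (fun i (_ : i ∈ Finset.univ) => hnormi i),
      aux_sum_expand I w gf t (t ^ 2 * G), aux_sum_expand_one Finset.univ gf t (t ^ 2 * G)]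
      at hs
    have heq : (1 + t ^ 2 * G) * W - 2 * t * PI
        - ((1 + t ^ 2 * G) * ((Finset.univ : Finset (Fin n)).card : ℝ) - 2 * t * S)
        = (W - n) * (1 + t ^ 2 * G) + 2 * t * G := by
      rw [← hSP]
      simp only [Finset.card_univ, Fintype.card_fin]
      ring
    rw [← hWdef, ← hPIdef, ← hSdef, heq] at hs
    simpa using hs
  -- combine ±t : 4 t G ≤ 2 ε n (1 + t² G)
  have hup : ∀ t : ℝ, 4 * t * G ≤ 2 * ε * n * (1 + t ^ 2 * G) := by
    intro t
    have h1 := hKey t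
    have h2 := hKey (-t)
    rw [abs_le] at h1 h2
    have e1 := h1.2
    have e2 := h2.1
    nlinarith [e1, e2]
  have hεn : (0 : ℝ) < ε * n := by positivity
  have hne : ε * (n : ℝ) ≠ 0 := ne_of_gt hεn
  -- plug t = 1/(ε n) : G ≤ ε² n²
  have hG : G ≤ (ε * n) ^ 2 := by
    have h1 := hup (1 / (ε * n))
    have hinv : (ε * n) * (1 / (ε * n)) = 1 := mul_one_div_cancel hne
    have h2 := mul_le_mul_of_nonneg_right h1 (sq_nonneg (ε * n))
    have h3 : 4 * (1 / (ε * n)) * G * (ε * n) ^ 2 = 4 * G * (ε * n) := by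
      linear_combination (4 * G * (ε * n)) * hinv
    have h4 : 2 * ε * ↑n * (1 + (1 / (ε * n)) ^ 2 * G) * (ε * n) ^ 2
        = 2 * (ε * n) * ((ε * n) ^ 2 + G) := by
      linear_combination (2 * (ε * n) * G * ((ε * n) * (1 / (ε * n)) + 1)) * hinv
    rw [h3, h4] at h2
    nlinarith [h2, hεn]
  -- final counting argument
  have habs := abs_le.mp hH0
  clear h hKey hup hsplit hgf_mem hgf_not hG2 hSP hH0 hPIdef hSdef hgf hne hεn
  clear gf S PI
  have hεn10 : ε * n ≤ (n : ℝ) / 10 := by nlinarith [hn1]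
  have hmain : (n : ℝ) / 4 ≤ m := by
    by_contra hcon
    push_neg at hcon
    rcases eq_or_lt_of_le (hm ▸ Nat.cast_nonneg I.card : (0:ℝ) ≤ m) with hm0 | hm0
    · -- m = 0 : I = ∅, W = 0, contradiction with |W - n| ≤ ε n
      have hI : I = ∅ := Finset.card_eq_zero.mp (by rw [hm] at hm0; exact_mod_cast hm0.symm)
      have hW0 : W = 0 := by rw [hWdef, hI]; simp
      rw [hW0] at habs
      nlinarith [habs.1, hn1]
    · -- m ≥ 1
      have hCS : ((∑ i ∈ I, (1 - w i)) : ℝ) ^ 2 ≤ m * Q := by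
        rw [hm, hQdef]
        exact_mod_cast sq_sum_le_card_mul_sum_sq (s := I) (f := fun i => 1 - w i)
      have hsum : ∑ i ∈ I, (1 - w i) = m - W := by
        rw [Finset.sum_sub_distrib, Finset.sum_const, nsmul_eq_mul, mul_one, hm, hWdef]
      rw [hsum] at hCS
      have hW9 : 9 / 10 * (n : ℝ) ≤ W := by linarith [habs.1]
      have hWm : 13 / 20 * (n : ℝ) ≤ W - m := by linarith
      have hn0' : (0:ℝ) ≤ 13 / 20 * (n : ℝ) := by linarith
      have hsq : (13 / 20 * (n : ℝ)) ^ 2 ≤ (m - W) ^ 2 := by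
        have := pow_le_pow_left₀ hn0' hWm 2
        nlinarith [this]
      have hQlb : (169 / 400) * (n : ℝ) ^ 2 ≤ m * Q := by nlinarith [hsq, hCS]
      have hε2n' : ε ^ 2 * (n : ℝ) ≤ (n : ℝ) / 100 := by nlinarith [hn1]
      have hGup : G ≤ (1 + ε ^ 2) * n := by nlinarith [hG, hε2n, hn1]
      have hQub : Q ≤ (n : ℝ) / 100 + (n : ℝ) / 4 := by
        have : G = (n : ℝ) - m + Q := hGdef
        nlinarith [hGup, hε2n', hcon]
      have h5 : m * Q ≤ m * ((n : ℝ) / 100 + (n : ℝ) / 4) :=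
        mul_le_mul_of_nonneg_left hQub (le_of_lt hm0)
      have h6 : m * ((n : ℝ) / 100 + (n : ℝ) / 4) ≤ ((n : ℝ) / 4) * ((n : ℝ) / 100 + (n : ℝ) / 4) := by
        apply mul_le_mul_of_nonneg_right (le_of_lt hcon)
        linarith
      nlinarith [hQlb, h5, h6, hn1]
  calc (1/4 : ℝ) * ε ^ (-2 : ℤ) = (ε ^ 2)⁻¹ / 4 := by rw [hzpow]; ring
    _ ≤ (n : ℝ) / 4 := by linarith
    _ ≤ m := hmain
end
end

section
/- Let ε ∈ (0,1) and let P ⊂ ℝ^d be a finite set that is β-stable for k-means with β > 512·ε^{-2}. Let {C_1,…,C_k} be an optimal k-means clustering of P with centers μ_1,…,μ_k (the centroids of the clusters) and let Δ = cost(P,{μ_1,…,μ_k}). Then the weighted set Ω = {μ_1,…,μ_k}, where μ_i carries weight |C_i|, together with the offset Δ, is an ε-coreset with offset of P: for every set S of k centers in ℝ^d, |∑_{i=1}^k |C_i|·cost(μ_i,S) + Δ − cost(P,S)| ≤ ε·cost(P,S). -/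
open Finset

noncomputable section

/-- `ℝ^d` as a Euclidean space. -/
abbrev Pt (d : ℕ) := EuclideanSpace ℝ (Fin d)

/-- `cost(p,S) = min_{s ∈ S} ‖p - s‖²`. -/
noncomputable def pcost {d : ℕ} (p : Pt d) (S : Finset (Pt d)) : ℝ :=
  sInf ((fun s => ‖p - s‖ ^ 2) '' (S : Set (Pt d)))

/-- `cost(P,S) = ∑_{p ∈ P} min_{s ∈ S} ‖p - s‖²`. -/
noncomputable def scost {d : ℕ} (P S : Finset (Pt d)) : ℝ :=
  ∑ p ∈ P, pcost p S

/-- `OPT_j`: the optimal k-means cost of `P` with `j` centers. -/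
noncomputable def kmOPT {d : ℕ} (P : Finset (Pt d)) (j : ℕ) : ℝ :=
  sInf ((fun S : Finset (Pt d) => scost P S) '' {S : Finset (Pt d) | S.card = j})

lemma pcost_nonneg {d : ℕ} (p : Pt d) (S : Finset (Pt d)) : 0 ≤ pcost p S := by
  apply Real.sInf_nonneg
  rintro x ⟨s, -, rfl⟩
  positivity

lemma pcost_le {d : ℕ} (p : Pt d) {S : Finset (Pt d)} {s : Pt d} (hs : s ∈ S) :
    pcost p S ≤ ‖p - s‖ ^ 2 := by
  apply csInf_le
  · exact ⟨0, by rintro x ⟨t, -, rfl⟩; positivity⟩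
  · exact ⟨s, by simpa using hs, rfl⟩

lemma pcost_exists {d : ℕ} (p : Pt d) {S : Finset (Pt d)} (hS : S.Nonempty) :
    ∃ s ∈ S, pcost p S = ‖p - s‖ ^ 2 := by
  have hfin : ((fun s => ‖p - s‖ ^ 2) '' (S : Set (Pt d))).Finite :=
    (S.finite_toSet).image _
  have hne : ((fun s => ‖p - s‖ ^ 2) '' (S : Set (Pt d))).Nonempty :=
    ⟨‖p - hS.choose‖ ^ 2, ⟨hS.choose, by simpa using hS.choose_spec, rfl⟩⟩
  obtain ⟨s, hs, h⟩ := hne.csInf_mem hfin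
  exact ⟨s, by simpa using hs, h.symm⟩

lemma scost_nonneg {d : ℕ} (P S : Finset (Pt d)) : 0 ≤ scost P S :=
  Finset.sum_nonneg fun p _ => pcost_nonneg p S

lemma kmOPT_le {d : ℕ} (P : Finset (Pt d)) {S : Finset (Pt d)} {n : ℕ}
    (h : S.card = n) : kmOPT P n ≤ scost P S := by
  apply csInf_le
  · exact ⟨0, by rintro x ⟨T, -, rfl⟩; exact scost_nonneg P T⟩
  · exact ⟨S, h, rfl⟩

lemma centroid_identity {d : ℕ} (C : Finset (Pt d)) (z : Pt d) :
    ∑ p ∈ C, ‖p - z‖ ^ 2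
      = ∑ p ∈ C, ‖p - ((C.card : ℝ))⁻¹ • ∑ p ∈ C, p‖ ^ 2
        + (C.card : ℝ) * ‖((C.card : ℝ))⁻¹ • (∑ p ∈ C, p) - z‖ ^ 2 := by
  rcases C.eq_empty_or_nonempty with rfl | hC
  · simp
  · set n : ℝ := (C.card : ℝ) with hn
    have hn0 : n ≠ 0 := by
      simp [hn, Finset.card_eq_zero, hC.ne_empty]
    set μ : Pt d := (n)⁻¹ • ∑ p ∈ C, p with hμ
    have hsum : ∑ p ∈ C, (p - μ) = 0 := by
      rw [Finset.sum_sub_distrib, Finset.sum_const, hμ, sub_eq_zero,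
        ← Nat.cast_smul_eq_nsmul ℝ, ← hn, smul_inv_smul₀ hn0]
    have key : ∀ p : Pt d, ‖p - z‖ ^ 2
        = ‖p - μ‖ ^ 2 + (2 * inner ℝ (p - μ) (μ - z) + ‖μ - z‖ ^ 2) := by
      intro p
      have : p - z = (p - μ) + (μ - z) := by abel
      rw [this, norm_add_sq_real]; ring
    calc ∑ p ∈ C, ‖p - z‖ ^ 2
        = ∑ p ∈ C, (‖p - μ‖ ^ 2 + (2 * inner ℝ (p - μ) (μ - z) + ‖μ - z‖ ^ 2)) := by
          exact Finset.sum_congr rfl fun p _ => key p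
      _ = ∑ p ∈ C, ‖p - μ‖ ^ 2 + (2 * inner ℝ (∑ p ∈ C, (p - μ)) (μ - z)
            + (C.card : ℝ) * ‖μ - z‖ ^ 2) := by
          rw [Finset.sum_add_distrib, Finset.sum_add_distrib, ← Finset.mul_sum,
            ← sum_inner, Finset.sum_const, nsmul_eq_mul]
      _ = _ := by rw [hsum, inner_zero_left, ← hn]; ring

lemma le_of_sq_le' {x y : ℝ} (h : x^2 ≤ y^2) (hy : 0 ≤ y) : x ≤ y := by
  nlinarith [sq_nonneg (x - y), sq_nonneg (x + y)]

lemma sum_mul_le_sqrt_mul_sqrt {ι : Type*} (s : Finset ι) (f g : ι → ℝ) :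
    ∑ i ∈ s, f i * g i ≤ Real.sqrt (∑ i ∈ s, f i ^ 2) * Real.sqrt (∑ i ∈ s, g i ^ 2) := by
  have h := Finset.sum_mul_sq_le_sq_mul_sq s f g
  calc ∑ i ∈ s, f i * g i ≤ |∑ i ∈ s, f i * g i| := le_abs_self _
    _ = Real.sqrt ((∑ i ∈ s, f i * g i)^2) := (Real.sqrt_sq_eq_abs _).symm
    _ ≤ Real.sqrt ((∑ i ∈ s, f i ^ 2) * ∑ i ∈ s, g i ^ 2) := Real.sqrt_le_sqrt h
    _ = _ := Real.sqrt_mul (Finset.sum_nonneg fun i _ => sq_nonneg _) _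

lemma pointwise_bound (u v c rj rl D t M K psj : ℝ)
    (hu : 0 ≤ u) (hc : 0 ≤ c) (hrj : 0 ≤ rj) (hrl : 0 ≤ rl) (hD : 0 ≤ D)
    (ht0 : 0 < t) (hM0 : 0 < M) (hK0 : 0 < K) (hMK : M + 2*t = K)
    (huv : u ≤ v) (hpsj : psj ≤ u + rj) (hpsj0 : 0 ≤ psj) (hcpsj : c ≤ psj)
    (hvc : v ≤ c + rl) (hvD : D - u ≤ v)
    (hrjD : K*rj ≤ t*D) (hrlD : K*rl ≤ t*D) :
    M^2*(psj^2 - c^2) ≤ 4*t*M*u^2 + 4*t*M*u*c + 8*t^2*u^2 := by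
  have hv : 0 ≤ v := le_trans hu huv
  have hvrl : v - rl ≤ c := by linarith
  have hDMeq : D*M = D*K - 2*(t*D) := by linear_combination D * hMK
  have hD2 : D ≤ 2*u + rj + rl := by linarith
  have hKD : K*D ≤ K*(2*u + rj + rl) := mul_le_mul_of_nonneg_left hD2 hK0.le
  have hDM : D*M ≤ 2*u*K := by nlinarith [hKD]
  have hMrj : M*rj ≤ 2*t*u := by
    have e1 : M*(K*rj) ≤ M*(t*D) := mul_le_mul_of_nonneg_left hrjD hM0.le
    have e2 : t*(D*M) ≤ t*(2*u*K) := mul_le_mul_of_nonneg_left hDM ht0.le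
    have e3 : K*(M*rj) ≤ K*(2*t*u) := by nlinarith [e1, e2]
    exact le_of_mul_le_mul_left e3 hK0
  have hMrl : M*rl ≤ 2*t*u := by
    have e1 : M*(K*rl) ≤ M*(t*D) := mul_le_mul_of_nonneg_left hrlD hM0.le
    have e2 : t*(D*M) ≤ t*(2*u*K) := mul_le_mul_of_nonneg_left hDM ht0.le
    have e3 : K*(M*rl) ≤ K*(2*t*u) := by nlinarith [e1, e2]
    exact le_of_mul_le_mul_left e3 hK0
  have hrlv : rl ≤ v := by
    have e1 : 0 ≤ M*D := mul_nonneg hM0.le hD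
    have e2 : K*D ≤ K*(u+v) := mul_le_mul_of_nonneg_left (by linarith) hK0.le
    have e3 : K*(u+v) ≤ K*(2*v) := mul_le_mul_of_nonneg_left (by linarith) hK0.le
    have e4 : M*D = K*D - 2*(t*D) := by linear_combination D * hMK
    have e5 : (2*K)*rl ≤ (2*K)*v := by nlinarith
    exact le_of_mul_le_mul_left e5 (by linarith)
  have h1 : psj^2 ≤ (u+rj)^2 := pow_le_pow_left₀ hpsj0 hpsj 2
  have h2 : (v-rl)^2 ≤ c^2 := pow_le_pow_left₀ (by linarith) hvrl 2
  have h3 : u^2 ≤ v^2 := pow_le_pow_left₀ hu huv 2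
  have he' : psj^2 - c^2 ≤ 2*u*rj + rj^2 + 2*v*rl - rl^2 := by nlinarith [h1, h2, h3]
  have P6 := mul_le_mul_of_nonneg_left he' (sq_nonneg M)
  have P1 := mul_le_mul_of_nonneg_left hMrj (by positivity : (0:ℝ) ≤ 2*u*M)
  have P2 := mul_le_mul_of_nonneg_left hMrl (by positivity : (0:ℝ) ≤ 2*v*M)
  have P3 := mul_le_mul_of_nonneg_left hvc (by positivity : (0:ℝ) ≤ 4*t*u*M)
  have P4 := sq_nonneg (2*t*u - M*rl)
  have P5 := mul_self_le_mul_self (mul_nonneg hM0.le hrj) hMrj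
  have P7 := mul_le_mul_of_nonneg_left hMrl (by positivity : (0:ℝ) ≤ 4*t*u)
  linarith [P1, P2, P3, P4, P5, P6, P7]

lemma endgame_core (b t K : ℝ) (hb : 1 ≤ b) (ht0 : 0 < t) (htc : t ≤ 1 + b)
    (htb : 8*(t*b) ≤ K*(1+b)) (hK22 : 22 ≤ K) (hK23 : K ≤ 23) :
    4*(K-2*t)*(1+b)^2 + 8*t*(1+b) ≤ b^2*(K-2*t)^2 := by
  have hb0 : (0:ℝ) < b := by linarith
  rcases le_or_gt (8*b) K with hcase | hcase
  · have h1 : 0 ≤ b^2*(K-2*(1+b))^2 - 4*(K-2*(1+b))*(1+b)^2 - 8*(1+b)*(1+b) := by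
      nlinarith [sq_nonneg (b-1), sq_nonneg (b*(K-2*(1+b)) - 16), mul_pos hb0 hb0]
    have h2 : 0 ≤ ((1+b) - t)*(4*b^2*(K-t-(1+b)) - 8*(1+b)*((1+b)-1)) := by
      apply mul_nonneg (by linarith)
      have h3 : (14:ℝ) ≤ K - t - (1+b) := by linarith
      nlinarith [mul_le_mul_of_nonneg_left hb hb0.le]
    nlinarith [h1, h2]
  · obtain ⟨T, hT8⟩ : ∃ T : ℝ, 8*b*T = K*(1+b) := ⟨K*(1+b)/(8*b), by field_simp⟩
    have hTt : t ≤ T := by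
      have h8 : 8*b*t ≤ 8*b*T := by rw [hT8]; linarith
      exact le_of_mul_le_mul_left h8 (by linarith)
    have hTK : T ≤ K/4 := by
      have h8 : 8*b*T ≤ 8*b*(K/4) := by rw [hT8]; nlinarith
      exact le_of_mul_le_mul_left h8 (by linarith)
    have hKb : (22:ℝ)/8 ≤ b := by linarith
    have h1 : 0 ≤ b^2*(K-2*T)^2 - 4*(K-2*T)*(1+b)^2 - 8*T*(1+b) := by
      have hmain : 48*(1+b)^2 ≤ K*(3*b-1)^2 := by
        nlinarith [sq_nonneg (3*b - 1 - (2/3)*(1+b))]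
      have hident : 16*b^2*(b^2*(K-2*T)^2 - 4*(K-2*T)*(1+b)^2 - 8*T*(1+b))
          = K*b^2*(K*(3*b-1)^2 - 48*(1+b)^2) := by
        linear_combination (8*b^3*T + (-8*K*b^3 + K*b^2*(1+b) + 16*b*(1+b)^2 - 16*b*(1+b)))*hT8
      nlinarith [hident, mul_le_mul_of_nonneg_left hmain
        (mul_nonneg (by linarith : (0:ℝ) ≤ K) (sq_nonneg b)), mul_pos hb0 hb0]
    have h2 : 0 ≤ (T - t)*(4*b^2*(K-t-T) - 8*(1+b)*((1+b)-1)) := by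
      apply mul_nonneg (by linarith)
      have h3 : (11:ℝ) ≤ K - t - T := by linarith
      nlinarith [mul_le_mul_of_nonneg_left hb hb0.le]
    nlinarith [h1, h2]

lemma endgame (a b ε K t M : ℝ) (ha : 0 < a) (hab : a ≤ b) (hε0 : 0 < ε) (hε1 : ε < 1)
    (h8 : 8*(ε*b) ≤ K*a) (hK22 : 22 ≤ K) (hK23 : K ≤ 23)
    (ht : t*a = ε*(a+b)) (hM : M = K - 2*t) :
    4*t*M*a^2 + 4*t*M*(a*b) + 8*t^2*a^2 ≤ ε*b^2*M^2 := by
  subst hM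
  obtain ⟨x, hxb⟩ : ∃ x, b = x*a := ⟨b/a, by field_simp⟩
  subst hxb
  have hx1 : 1 ≤ x := by
    have := le_of_mul_le_mul_right (by linarith [hab] : 1*a ≤ x*a) ha
    linarith
  have ht' : t = ε*(1+x) := by
    have h1 : t*a = (ε*(1+x))*a := by linear_combination ht
    exact mul_right_cancel₀ ha.ne' h1
  subst ht'
  have h8' : 8*(ε*x) ≤ K := by
    have h1 : (8*(ε*x))*a ≤ K*a := by linear_combination h8
    exact le_of_mul_le_mul_right h1 ha
  have hεx : 0 < ε*(1+x) := by
    have : (0:ℝ) < 1 + x := by linarith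
    exact mul_pos hε0 this
  have core := endgame_core x (ε*(1+x)) K hx1 hεx
    (by nlinarith) (by nlinarith) hK22 hK23
  have hfin := mul_le_mul_of_nonneg_left core
    (by nlinarith [sq_nonneg a] : (0:ℝ) ≤ ε*a^2)
  nlinarith [hfin]

lemma caseB_aux (a b ε K : ℝ) (ha : 0 ≤ a) (hb : 0 < b) (hε0 : 0 < ε) (hε1 : ε < 1)
    (hK2 : K^2 = 512) (hK22 : 22 ≤ K) (hcon : K*a < 8*(ε*b)) :
    2*a^2 + 2*(a*b) ≤ ε*b^2 := by
  have h1 : 0 < 8*(ε*b) - K*a := by linarith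
  have h2 : 0 < 8*(ε*b) + K*a := by nlinarith [mul_pos hε0 hb]
  have h3 : K^2*a^2 ≤ 64*(ε^2*b^2) := by nlinarith [mul_pos h1 h2]
  have h4 : K*(a*b) ≤ 8*(ε*b^2) := by nlinarith [mul_pos h1 hb]
  have h5 : 22*(a*b) ≤ K*(a*b) := by
    have hab : 0 ≤ a*b := mul_nonneg ha hb.le
    nlinarith [mul_le_mul_of_nonneg_right hK22 hab]
  nlinarith [h3, h4, h5, sq_nonneg b, mul_pos hε0 (mul_pos hb hb), sq_nonneg (ε*b)]


/-- For instances with stability `β > 512·ε^{-2}`, the optimal centroids (weighted by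
cluster sizes) together with the offset `Δ = OPT_k` form an ε-coreset with offset of
size `k`. -/
theorem offset_coreset_for_very_stable
    {d : ℕ} (k : ℕ) (ε β : ℝ) (P : Finset (Pt d)) (cl : Pt d → Fin k)
    (hε0 : 0 < ε) (hε1 : ε < 1) (hk : 1 ≤ k)
    (hβ : 512 * ε ^ (-2 : ℤ) < β)
    (hstable : kmOPT P k * (1 + β) ≤ kmOPT P (k - 1)) :
    -- the clusters of the partition and their centroids
    let Cj : Fin k → Finset (Pt d) := fun j => P.filter fun p => cl p = j
    let μc : Fin k → Pt d := fun j => (((Cj j).card : ℝ))⁻¹ • ∑ p ∈ Cj j, p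
    let Δ : ℝ := ∑ j : Fin k, ∑ p ∈ Cj j, ‖p - μc j‖ ^ 2
    -- the clustering is an optimal k-means clustering of `P`
    Δ = kmOPT P k →
    -- coreset-with-offset guarantee
    ∀ S : Finset (Pt d), S.card = k →
      |(∑ j : Fin k, ((Cj j).card : ℝ) * pcost (μc j) S) + Δ - scost P S|
        ≤ ε * scost P S := by
  rcases subsingleton_or_nontrivial (Pt d) with hss | hnt
  · -- degenerate: the space is a single point
    intro Cj μc Δ hΔ S hS
    have hSne : S.Nonempty := Finset.card_pos.mp (by rw [hS]; omega)
    have hpc : ∀ p : Pt d, pcost p S = 0 := by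
      intro p
      obtain ⟨s, _, hval⟩ := pcost_exists p hSne
      rw [hval, Subsingleton.elim p s]
      simp
    have hΔ0 : Δ = 0 := by
      have : Δ = ∑ j : Fin k, ∑ p ∈ Cj j, ‖p - μc j‖ ^ 2 := rfl
      rw [this]
      apply Finset.sum_eq_zero
      intro j _
      apply Finset.sum_eq_zero
      intro p _
      rw [Subsingleton.elim p (μc j)]
      simp
    have hs0 : scost P S = 0 := Finset.sum_eq_zero fun p _ => hpc p
    simp [hΔ0, hs0, hpc]
  · -- the space is nontrivial, hence infinite
    haveI : DecidableEq (Pt d) := Classical.decEq _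
    haveI hinf : Infinite (Pt d) := by
      obtain ⟨x, y, hxy⟩ := exists_pair_ne (Pt d)
      have hv : x - y ≠ 0 := sub_ne_zero.2 hxy
      exact Infinite.of_injective (fun n : ℕ => (n : ℝ) • (x - y))
        fun m n h => Nat.cast_injective (smul_left_injective ℝ hv h)
    intro Cj μc Δ hΔ S hS
    have hSne : S.Nonempty := Finset.card_pos.mp (by rw [hS]; omega)
    choose σ hσS hσv using fun p : Pt d => pcost_exists p hSne
    choose s hsS hsv using fun j : Fin k => pcost_exists (μc j) hSne
    have hfib : ∀ f : Pt d → ℝ, ∑ j : Fin k, ∑ p ∈ Cj j, f p = ∑ p ∈ P, f p :=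
      fun f => Finset.sum_fiberwise P cl f
    have hu2 : ∑ p ∈ P, ‖p - μc (cl p)‖ ^ 2 = Δ := by
      rw [← hfib fun p => ‖p - μc (cl p)‖ ^ 2]
      exact Finset.sum_congr rfl fun j _ => Finset.sum_congr rfl fun p hp => by
        rw [(Finset.mem_filter.mp hp).2]
    have hc2 : ∑ p ∈ P, ‖p - σ p‖ ^ 2 = scost P S :=
      Finset.sum_congr rfl fun p _ => (hσv p).symm
    have hΔsum : Δ = ∑ j : Fin k, ∑ p ∈ Cj j, ‖p - μc j‖ ^ 2 := rfl
    have hmemCj : ∀ (j : Fin k), ∀ p ∈ Cj j, cl p = j :=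
      fun j p hp => (Finset.mem_filter.mp hp).2
    have hRsum : scost P S = ∑ j : Fin k, ∑ p ∈ Cj j, pcost p S :=
      (hfib fun p => pcost p S).symm
    have hDjnn : ∀ j, (0:ℝ) ≤ ∑ p ∈ Cj j, ‖p - μc j‖ ^ 2 :=
      fun j => Finset.sum_nonneg fun p _ => sq_nonneg _
    have hRjnn : ∀ j, (0:ℝ) ≤ ∑ p ∈ Cj j, pcost p S :=
      fun j => Finset.sum_nonneg fun p _ => pcost_nonneg p S
    have hkey : ∀ (j : Fin k) (z : Pt d), ∑ p ∈ Cj j, ‖p - z‖ ^ 2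
        = (∑ p ∈ Cj j, ‖p - μc j‖ ^ 2) + ((Cj j).card : ℝ) * ‖μc j - z‖ ^ 2 :=
      fun j z => centroid_identity (Cj j) z
    clear_value Cj μc Δ
    have hXj : ∀ j : Fin k, ((Cj j).card : ℝ) * pcost (μc j) S
        + (∑ p ∈ Cj j, ‖p - μc j‖ ^ 2) = ∑ p ∈ Cj j, ‖p - s j‖ ^ 2 := by
      intro j
      rw [hkey j (s j), hsv j]
      ring
    have hXeq : (∑ j : Fin k, ((Cj j).card : ℝ) * pcost (μc j) S) + Δ - scost P S
        = ∑ p ∈ P, (‖p - s (cl p)‖ ^ 2 - pcost p S) := by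
      rw [← hfib fun p => ‖p - s (cl p)‖ ^ 2 - pcost p S, hΔsum, hRsum,
        ← Finset.sum_add_distrib, ← Finset.sum_sub_distrib]
      refine Finset.sum_congr rfl fun j _ => ?_
      rw [hXj j, ← Finset.sum_sub_distrib]
      exact Finset.sum_congr rfl fun p hp => by rw [hmemCj j p hp]
    have hX0 : 0 ≤ (∑ j : Fin k, ((Cj j).card : ℝ) * pcost (μc j) S) + Δ - scost P S := by
      rw [hXeq]
      refine Finset.sum_nonneg fun p _ => ?_
      have h9 := pcost_le p (hsS (cl p))
      linarith only [h9]
    rw [abs_of_nonneg hX0]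
    have hΔnn : 0 ≤ Δ := by
      rw [hΔsum]; exact Finset.sum_nonneg fun j _ => hDjnn j
    have hRnn : 0 ≤ scost P S := scost_nonneg P S
    have ha2 : Real.sqrt Δ ^ 2 = Δ := Real.sq_sqrt hΔnn
    have hb2 : Real.sqrt (scost P S) ^ 2 = scost P S := Real.sq_sqrt hRnn
    have ha0 : 0 ≤ Real.sqrt Δ := Real.sqrt_nonneg _
    have hb0 : 0 ≤ Real.sqrt (scost P S) := Real.sqrt_nonneg _
    -- within-cluster Cauchy-Schwarz
    have hclCS : ∀ j : Fin k, ∑ p ∈ Cj j, ‖p - μc j‖ * ‖p - σ p‖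
        ≤ Real.sqrt (∑ p ∈ Cj j, ‖p - μc j‖ ^ 2) * Real.sqrt (∑ p ∈ Cj j, pcost p S) := by
      intro j
      have h := sum_mul_le_sqrt_mul_sqrt (Cj j) (fun p => ‖p - μc j‖) (fun p => ‖p - σ p‖)
      have h2 : ∑ p ∈ Cj j, ‖p - σ p‖ ^ 2 = ∑ p ∈ Cj j, pcost p S :=
        Finset.sum_congr rfl fun p _ => (hσv p).symm
      rwa [h2] at h
    -- expansion of ∑ (u+c)^2
    have hexp : ∀ j : Fin k, ∑ p ∈ Cj j, (‖p - μc j‖ + ‖p - σ p‖) ^ 2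
        = (∑ p ∈ Cj j, ‖p - μc j‖ ^ 2) + 2 * (∑ p ∈ Cj j, ‖p - μc j‖ * ‖p - σ p‖)
          + (∑ p ∈ Cj j, pcost p S) := by
      intro j
      have h1 : ∀ p ∈ Cj j, (‖p - μc j‖ + ‖p - σ p‖) ^ 2
          = ‖p - μc j‖ ^ 2 + 2 * (‖p - μc j‖ * ‖p - σ p‖) + pcost p S := by
        intro p _
        rw [hσv p]; ring
      rw [Finset.sum_congr rfl h1, Finset.sum_add_distrib, Finset.sum_add_distrib,
        Finset.mul_sum]
    -- point-to-cluster-center bound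
    have hrle : ∀ (j : Fin k), ∀ p ∈ Cj j, pcost (μc j) S
        ≤ (‖p - μc j‖ + ‖p - σ p‖) ^ 2 := by
      intro j p _
      have h1 : pcost (μc j) S ≤ ‖μc j - σ p‖ ^ 2 := pcost_le _ (hσS p)
      have h2 : ‖μc j - σ p‖ ≤ ‖p - μc j‖ + ‖p - σ p‖ := by
        have he : μc j - σ p = -(p - μc j) + (p - σ p) := by abel
        rw [he]
        exact (norm_add_le _ _).trans (by rw [norm_neg])
      have h3 := pow_le_pow_left₀ (norm_nonneg _) h2 2
      linarith only [h1, h3]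
    have hnjr : ∀ j : Fin k, ((Cj j).card : ℝ) * pcost (μc j) S
        ≤ (∑ p ∈ Cj j, ‖p - μc j‖ ^ 2) + (∑ p ∈ Cj j, pcost p S)
          + 2 * (Real.sqrt (∑ p ∈ Cj j, ‖p - μc j‖ ^ 2)
              * Real.sqrt (∑ p ∈ Cj j, pcost p S)) := by
      intro j
      have hsum := Finset.sum_le_sum (hrle j)
      rw [Finset.sum_const, nsmul_eq_mul, hexp j] at hsum
      have h9 := hclCS j
      linarith only [hsum, h9]
    -- case-1 bound
    have hcase1 : (∑ j : Fin k, ((Cj j).card : ℝ) * pcost (μc j) S) + Δ - scost P S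
        ≤ 2*Δ + 2*(Real.sqrt Δ * Real.sqrt (scost P S)) := by
      have h1 : ∀ j : Fin k, ((Cj j).card : ℝ) * pcost (μc j) S
          + (∑ p ∈ Cj j, ‖p - μc j‖ ^ 2) - (∑ p ∈ Cj j, pcost p S)
          ≤ 2*(∑ p ∈ Cj j, ‖p - μc j‖ ^ 2)
            + 2*(Real.sqrt (∑ p ∈ Cj j, ‖p - μc j‖ ^ 2)
              * Real.sqrt (∑ p ∈ Cj j, pcost p S)) := by
        intro j
        have h9 := hnjr j
        linarith only [h9]
      have h2 : (∑ j : Fin k, ((Cj j).card : ℝ) * pcost (μc j) S) + Δ - scost P S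
          = ∑ j : Fin k, (((Cj j).card : ℝ) * pcost (μc j) S
            + (∑ p ∈ Cj j, ‖p - μc j‖ ^ 2) - (∑ p ∈ Cj j, pcost p S)) := by
        rw [hΔsum, hRsum, ← Finset.sum_add_distrib, ← Finset.sum_sub_distrib]
      have h3 : ∑ j : Fin k, Real.sqrt (∑ p ∈ Cj j, ‖p - μc j‖ ^ 2)
          * Real.sqrt (∑ p ∈ Cj j, pcost p S)
          ≤ Real.sqrt Δ * Real.sqrt (scost P S) := by
        have h := sum_mul_le_sqrt_mul_sqrt Finset.univ
          (fun j => Real.sqrt (∑ p ∈ Cj j, ‖p - μc j‖ ^ 2))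
          (fun j => Real.sqrt (∑ p ∈ Cj j, pcost p S))
        have e1 : ∑ j : Fin k, Real.sqrt (∑ p ∈ Cj j, ‖p - μc j‖ ^ 2) ^ 2 = Δ := by
          rw [hΔsum]
          exact Finset.sum_congr rfl fun j _ => Real.sq_sqrt (hDjnn j)
        have e2 : ∑ j : Fin k, Real.sqrt (∑ p ∈ Cj j, pcost p S) ^ 2 = scost P S := by
          rw [hRsum]
          exact Finset.sum_congr rfl fun j _ => Real.sq_sqrt (hRjnn j)
        rwa [e1, e2] at h
      calc (∑ j : Fin k, ((Cj j).card : ℝ) * pcost (μc j) S) + Δ - scost P S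
          = ∑ j : Fin k, (((Cj j).card : ℝ) * pcost (μc j) S
            + (∑ p ∈ Cj j, ‖p - μc j‖ ^ 2) - (∑ p ∈ Cj j, pcost p S)) := h2
        _ ≤ ∑ j : Fin k, (2*(∑ p ∈ Cj j, ‖p - μc j‖ ^ 2)
            + 2*(Real.sqrt (∑ p ∈ Cj j, ‖p - μc j‖ ^ 2)
              * Real.sqrt (∑ p ∈ Cj j, pcost p S))) := Finset.sum_le_sum fun j _ => h1 j
        _ = 2*Δ + 2*(∑ j : Fin k, Real.sqrt (∑ p ∈ Cj j, ‖p - μc j‖ ^ 2)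
              * Real.sqrt (∑ p ∈ Cj j, pcost p S)) := by
            rw [Finset.sum_add_distrib, ← Finset.mul_sum, ← Finset.mul_sum, hΔsum]
        _ ≤ _ := by linarith only [h3]
    by_cases hA : 2*Δ + 2*(Real.sqrt Δ * Real.sqrt (scost P S)) ≤ ε * scost P S
    · exact le_trans hcase1 hA
    ·
      push_neg at hA
      obtain ⟨K, hK⟩ : ∃ K : ℝ, K = Real.sqrt 512 := ⟨_, rfl⟩
      have hK2 : K^2 = 512 := by rw [hK]; exact Real.sq_sqrt (by norm_num)
      have hK0 : 0 ≤ K := by rw [hK]; exact Real.sqrt_nonneg _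
      have hK22 : 22 ≤ K := by nlinarith only [hK2, hK0]
      have hK23 : K ≤ 23 := by nlinarith only [hK2, hK0]
      have hΔpos : 0 < Δ := by
        rcases eq_or_lt_of_le hΔnn with h0 | h0
        · exfalso
          rw [← h0, Real.sqrt_zero] at hA
          simp at hA
          have h9 : (0:ℝ) ≤ ε * scost P S := mul_nonneg hε0.le hRnn
          linarith only [hA, h9]
        · exact h0
      have hRΔ : Δ ≤ scost P S := by rw [hΔ]; exact kmOPT_le P hS
      have hRpos : 0 < scost P S := lt_of_lt_of_le hΔpos hRΔ
      have hapos : 0 < Real.sqrt Δ := Real.sqrt_pos.2 hΔpos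
      have hbpos : 0 < Real.sqrt (scost P S) := Real.sqrt_pos.2 hRpos
      have hab : Real.sqrt Δ ≤ Real.sqrt (scost P S) := Real.sqrt_le_sqrt hRΔ
      have hβpos : 0 < β := by
        have h1 : (0:ℝ) < ε ^ (-2:ℤ) := zpow_pos hε0 _
        nlinarith only [h1, hβ]
      have hβε : 512 ≤ ε^2*β := by
        have h1 : ε ^ (-2:ℤ) = (ε^2)⁻¹ := by
          rw [zpow_neg]
          norm_cast
        have h2 := mul_lt_mul_of_pos_right hβ (pow_pos hε0 2)
        rw [h1] at h2
        have hinv : (ε^2)⁻¹*(ε^2) = 1 := inv_mul_cancel₀ (pow_pos hε0 2).ne'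
        nlinarith only [h2, hinv]
      have hcaseB : 8*(ε*Real.sqrt (scost P S)) ≤ K*Real.sqrt Δ := by
        by_contra hcon
        push_neg at hcon
        have hfoo := caseB_aux (Real.sqrt Δ) (Real.sqrt (scost P S)) ε K ha0 hbpos hε0 hε1
          hK2 hK22 hcon
        rw [ha2, hb2] at hfoo
        linarith only [hfoo, hA]
      -- merge lemma : stability gives separation of optimal centroids
      have hmerge : ∀ j l : Fin k, j ≠ l →
          β*Δ ≤ ((Cj j).card : ℝ) * ‖μc j - μc l‖^2 := by
        intro j l hjl
        have hlmem : l ∈ Finset.univ.erase j :=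
          Finset.mem_erase.2 ⟨Ne.symm hjl, Finset.mem_univ l⟩
        have hTcard : (Finset.image μc (Finset.univ.erase j)).card ≤ k - 1 :=
          le_trans Finset.card_image_le
            (by rw [Finset.card_erase_of_mem (Finset.mem_univ j), Finset.card_univ,
                Fintype.card_fin])
        obtain ⟨T', hTT', hT'card⟩ :=
          Infinite.exists_superset_card_eq (Finset.image μc (Finset.univ.erase j)) (k-1) hTcard
        have h1 : kmOPT P (k-1) ≤ scost P T' := kmOPT_le P hT'card
        have h2 : scost P T' ≤ Δ + ((Cj j).card : ℝ)*‖μc j - μc l‖^2 := by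
          have hstep : ∀ j' : Fin k, ∑ p ∈ Cj j', pcost p T'
              ≤ (∑ p ∈ Cj j', ‖p - μc j'‖ ^ 2)
                + (if j' = j then ((Cj j).card : ℝ)*‖μc j - μc l‖^2 else 0) := by
            intro j'
            by_cases hj' : j' = j
            · subst hj'
              simp only [if_pos rfl]
              have hml : μc l ∈ T' := hTT' (Finset.mem_image_of_mem μc hlmem)
              calc ∑ p ∈ Cj j', pcost p T'
                  ≤ ∑ p ∈ Cj j', ‖p - μc l‖^2 :=
                    Finset.sum_le_sum fun p _ => pcost_le p hml
                _ = _ := hkey j' (μc l)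
            · simp only [if_neg hj', add_zero]
              have hmj' : μc j' ∈ T' := hTT'
                (Finset.mem_image_of_mem μc (Finset.mem_erase.2 ⟨hj', Finset.mem_univ _⟩))
              exact Finset.sum_le_sum fun p _ => pcost_le p hmj'
          calc scost P T' = ∑ j' : Fin k, ∑ p ∈ Cj j', pcost p T' :=
                (hfib fun p => pcost p T').symm
            _ ≤ ∑ j' : Fin k, ((∑ p ∈ Cj j', ‖p - μc j'‖ ^ 2)
                + (if j' = j then ((Cj j).card : ℝ)*‖μc j - μc l‖^2 else 0)) :=
                Finset.sum_le_sum fun j' _ => hstep j'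
            _ = Δ + ((Cj j).card : ℝ)*‖μc j - μc l‖^2 := by
                rw [Finset.sum_add_distrib, ← hΔsum, Finset.sum_ite_eq' Finset.univ j]
                simp
        have h3 : Δ*(1+β) ≤ kmOPT P (k-1) := by rw [hΔ]; exact hstable
        linarith only [h1, h2, h3]
      -- cluster size times squared center-to-S distance is bounded
      have hnr : ∀ j : Fin k, ((Cj j).card : ℝ) * ‖μc j - s j‖^2
          ≤ (Real.sqrt Δ + Real.sqrt (scost P S))^2 := by
        intro j
        have hsum := Finset.sum_le_sum (hrle j)
        rw [Finset.sum_const, nsmul_eq_mul, hexp j] at hsum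
        have hDjle : (∑ p ∈ Cj j, ‖p - μc j‖ ^ 2) ≤ Real.sqrt Δ ^ 2 := by
          rw [ha2, hΔsum]
          exact Finset.single_le_sum (fun i _ => hDjnn i) (Finset.mem_univ j)
        have hRjle : (∑ p ∈ Cj j, pcost p S) ≤ Real.sqrt (scost P S) ^ 2 := by
          rw [hb2, hRsum]
          exact Finset.single_le_sum (fun i _ => hRjnn i) (Finset.mem_univ j)
        have hs1 : Real.sqrt (∑ p ∈ Cj j, ‖p - μc j‖ ^ 2) ≤ Real.sqrt Δ := by
          rw [← Real.sqrt_sq ha0]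
          exact Real.sqrt_le_sqrt hDjle
        have hs2 : Real.sqrt (∑ p ∈ Cj j, pcost p S) ≤ Real.sqrt (scost P S) := by
          rw [← Real.sqrt_sq hb0]
          exact Real.sqrt_le_sqrt hRjle
        have hCS := hclCS j
        have hprod : Real.sqrt (∑ p ∈ Cj j, ‖p - μc j‖ ^ 2)
            * Real.sqrt (∑ p ∈ Cj j, pcost p S)
            ≤ Real.sqrt Δ * Real.sqrt (scost P S) :=
          mul_le_mul hs1 hs2 (Real.sqrt_nonneg _) ha0
        have hμs : ((Cj j).card : ℝ) * ‖μc j - s j‖^2 = ((Cj j).card : ℝ) * pcost (μc j) S := by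
          rw [hsv j]
        rw [hμs]
        nlinarith only [hsum, hCS, hprod, hDjle, hRjle]
      -- the scale t and margin M
      obtain ⟨t, ht⟩ : ∃ t : ℝ, t*Real.sqrt Δ = ε*(Real.sqrt Δ + Real.sqrt (scost P S)) :=
        ⟨ε*(Real.sqrt Δ + Real.sqrt (scost P S))/Real.sqrt Δ, by field_simp⟩
      have ht0 : 0 < t := by
        have h1 : 0 < t*Real.sqrt Δ := by
          rw [ht]; exact mul_pos hε0 (by linarith)
        by_contra h
        push_neg at h
        nlinarith only [h1, h, hapos]
      have htub : t ≤ 1 + K/8 := by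
        have h1 : t*Real.sqrt Δ ≤ (1 + K/8)*Real.sqrt Δ := by
          rw [ht]
          have h7 : ε*Real.sqrt Δ ≤ Real.sqrt Δ := by nlinarith only [hapos, hε1]
          have h8 : ε*Real.sqrt (scost P S) ≤ K/8*Real.sqrt Δ := by
            linarith only [hcaseB]
          nlinarith only [h7, h8]
        exact le_of_mul_le_mul_right h1 hapos
      obtain ⟨M, hM⟩ : ∃ M : ℝ, M = K - 2*t := ⟨_, rfl⟩
      have hM0 : 0 < M := by rw [hM]; linarith only [htub, hK22]
      have hMK : M + 2*t = K := by rw [hM]; ring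
      -- separation between a centroid and its nearest S-center
      have hsep : ∀ j l : Fin k, j ≠ l →
          K*‖μc j - s j‖ ≤ t*‖μc j - μc l‖ := by
        intro j l hjl
        have h1 := hmerge j l hjl
        have h2 := hnr j
        have h3 : β*Δ*‖μc j - s j‖^2
            ≤ ((Cj j).card : ℝ)*‖μc j - μc l‖^2*‖μc j - s j‖^2 :=
          mul_le_mul_of_nonneg_right h1 (sq_nonneg _)
        have h4 : ((Cj j).card : ℝ)*‖μc j - s j‖^2*‖μc j - μc l‖^2
            ≤ (Real.sqrt Δ + Real.sqrt (scost P S))^2*‖μc j - μc l‖^2 :=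
          mul_le_mul_of_nonneg_right h2 (sq_nonneg _)
        have h5 : 512*(Δ*‖μc j - s j‖^2) ≤ (ε^2*β)*(Δ*‖μc j - s j‖^2) :=
          mul_le_mul_of_nonneg_right hβε (mul_nonneg hΔnn (sq_nonneg _))
        have h6 : (K*‖μc j - s j‖*Real.sqrt Δ)^2 ≤ (t*‖μc j - μc l‖*Real.sqrt Δ)^2 := by
          have e1 : (K*‖μc j - s j‖*Real.sqrt Δ)^2 = 512*(Δ*‖μc j - s j‖^2) := by
            rw [mul_pow, mul_pow, hK2, ha2]; ring
          have e2 : (t*‖μc j - μc l‖*Real.sqrt Δ)^2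
              = ε^2*(Real.sqrt Δ + Real.sqrt (scost P S))^2*‖μc j - μc l‖^2 := by
            rw [show t*‖μc j - μc l‖*Real.sqrt Δ = (t*Real.sqrt Δ)*‖μc j - μc l‖ by ring,
              ht]
            ring
          rw [e1, e2]
          linarith only [h5, mul_le_mul_of_nonneg_left h3 (sq_nonneg ε),
            mul_le_mul_of_nonneg_left h4 (sq_nonneg ε)]
        have h7 : K*‖μc j - s j‖*Real.sqrt Δ ≤ t*‖μc j - μc l‖*Real.sqrt Δ :=
          le_of_sq_le' h6 (mul_nonneg (mul_nonneg ht0.le (norm_nonneg _)) ha0)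
        exact le_of_mul_le_mul_right h7 hapos
      -- the nearest-center map is injective hence bijective
      have hinj : Function.Injective s := by
        intro j l hsl
        by_contra hjl
        have h1 := hsep j l hjl
        have h2 := hsep l j (fun h => hjl h.symm)
        rw [norm_sub_rev (μc l) (μc j)] at h2
        have hDtri : ‖μc j - μc l‖ ≤ ‖μc j - s j‖ + ‖μc l - s l‖ := by
          have he : μc j - μc l = (μc j - s j) - (μc l - s l) := by rw [hsl]; abel
          rw [he]
          exact norm_sub_le _ _
        have hKD : K*‖μc j - μc l‖ ≤ 2*t*‖μc j - μc l‖ := by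
          have h9 := mul_le_mul_of_nonneg_left hDtri hK0
          linarith only [h1, h2, h9]
        have hMD : M*‖μc j - μc l‖ = K*‖μc j - μc l‖ - 2*t*‖μc j - μc l‖ := by
          linear_combination ‖μc j - μc l‖ * hMK
        have hD0 : ‖μc j - μc l‖ = 0 := by
          have hd0 : 0 ≤ ‖μc j - μc l‖ := norm_nonneg _
          have hd1 : ‖μc j - μc l‖ ≤ 0 := by nlinarith only [hM0, hMD, hKD]
          linarith only [hd0, hd1]
        have := hmerge j l hjl
        rw [hD0] at this
        simp at this
        nlinarith only [this, mul_pos hβpos hΔpos]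
      have hssurj : ∀ p, ∃ l, s l = σ p := by
        intro p
        have hcard : Fintype.card (Fin k) = Fintype.card {x // x ∈ S} := by
          simp [Fintype.card_coe, hS]
        have hbij : Function.Bijective (fun j : Fin k => (⟨s j, hsS j⟩ : {x // x ∈ S})) :=
          (Fintype.bijective_iff_injective_and_card _).2
            ⟨fun j l h => hinj (congrArg Subtype.val h), hcard⟩
        obtain ⟨l, hl⟩ := hbij.2 ⟨σ p, hσS p⟩
        exact ⟨l, congrArg Subtype.val hl⟩
      -- each point is assigned to a nearest optimal centroid
      have hopt : ∀ p ∈ P, ∀ l : Fin k, ‖p - μc (cl p)‖^2 ≤ ‖p - μc l‖^2 := by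
        have hTcard : (Finset.image μc Finset.univ).card ≤ k :=
          le_trans Finset.card_image_le (by simp)
        obtain ⟨M', hM'sub, hM'card⟩ :=
          Infinite.exists_superset_card_eq (Finset.image μc Finset.univ) k hTcard
        have h1 : kmOPT P k ≤ scost P M' := kmOPT_le P hM'card
        have h2 : scost P M' ≤ ∑ p ∈ P, ‖p - μc (cl p)‖ ^ 2 :=
          Finset.sum_le_sum fun p _ =>
            pcost_le p (hM'sub (Finset.mem_image_of_mem μc (Finset.mem_univ (cl p))))
        have h4 : scost P M' = Δ := le_antisymm (h2.trans_eq hu2) (by rw [← hΔ] at h1; exact h1)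
        have hsum0 : ∑ p ∈ P, (‖p - μc (cl p)‖^2 - pcost p M') = 0 := by
          rw [Finset.sum_sub_distrib, hu2]
          have : ∑ p ∈ P, pcost p M' = scost P M' := rfl
          rw [this, h4, sub_self]
        have hzero := (Finset.sum_eq_zero_iff_of_nonneg (fun q hq => by
          have h9 := pcost_le q (hM'sub (Finset.mem_image_of_mem μc (Finset.mem_univ (cl q))))
          linarith only [h9])).1 hsum0
        intro p hp l
        have h5 := hzero p hp
        have h6 : pcost p M' ≤ ‖p - μc l‖^2 :=
          pcost_le p (hM'sub (Finset.mem_image_of_mem μc (Finset.mem_univ l)))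
        linarith only [h5, h6]
      -- pointwise deficiency bound
      have hpt : ∀ p ∈ P, M^2*(‖p - s (cl p)‖^2 - pcost p S)
          ≤ 4*t*M*‖p - μc (cl p)‖^2 + 4*t*M*(‖p - μc (cl p)‖*‖p - σ p‖)
            + 8*t^2*‖p - μc (cl p)‖^2 := by
        intro p hp
        obtain ⟨l, hl⟩ := hssurj p
        by_cases hjl : l = cl p
        · have hz : ‖p - s (cl p)‖^2 - pcost p S = 0 := by
            rw [hσv p, ← hl, hjl, sub_self]
          rw [hz, mul_zero]
          have h1 : 0 ≤ 4*t*M := by nlinarith only [mul_pos ht0 hM0]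
          have h2 : 0 ≤ 8*t^2 := by nlinarith only [sq_nonneg t]
          have h3 := norm_nonneg (p - μc (cl p))
          have h4 := norm_nonneg (p - σ p)
          have h5 : 0 ≤ ‖p - μc (cl p)‖*‖p - σ p‖ := mul_nonneg h3 h4
          linarith only [mul_nonneg h1 (sq_nonneg ‖p - μc (cl p)‖), mul_nonneg h1 h5,
            mul_nonneg h2 (sq_nonneg ‖p - μc (cl p)‖)]
        · have hq := pointwise_bound ‖p - μc (cl p)‖ ‖p - μc l‖ ‖p - σ p‖
            ‖μc (cl p) - s (cl p)‖ ‖μc l - s l‖ ‖μc (cl p) - μc l‖ t M K ‖p - s (cl p)‖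
            (norm_nonneg _) (norm_nonneg _) (norm_nonneg _) (norm_nonneg _) (norm_nonneg _)
            ht0 hM0 (by linarith only [hK22]) hMK
            (le_of_sq_le' (hopt p hp l) (norm_nonneg _))
            (by
              have he : p - s (cl p) = (p - μc (cl p)) + (μc (cl p) - s (cl p)) := by abel
              rw [he]; exact norm_add_le _ _)
            (norm_nonneg _)
            (by
              refine le_of_sq_le' ?_ (norm_nonneg _)
              rw [← hσv p]
              exact pcost_le p (hsS (cl p)))
            (by
              have he : p - μc l = (p - σ p) + (σ p - μc l) := by abel
              rw [he]
              refine (norm_add_le _ _).trans ?_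
              rw [← hl, norm_sub_rev (s l) (μc l)])
            (by
              have he : μc (cl p) - μc l = -(p - μc (cl p)) + (p - μc l) := by abel
              have h9 : ‖μc (cl p) - μc l‖ ≤ ‖p - μc (cl p)‖ + ‖p - μc l‖ := by
                rw [he]
                exact (norm_add_le _ _).trans (by rw [norm_neg])
              linarith only [h9])
            (hsep (cl p) l (fun h => hjl h.symm))
            (by
              have h8 := hsep l (cl p) hjl
              rwa [norm_sub_rev (μc l) (μc (cl p))] at h8)
          have hps : pcost p S = ‖p - σ p‖^2 := hσv p
          rw [hps]
          linarith only [hq]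
      -- sum everything
      have hsumCS : ∑ p ∈ P, ‖p - μc (cl p)‖*‖p - σ p‖
          ≤ Real.sqrt Δ * Real.sqrt (scost P S) := by
        have h := sum_mul_le_sqrt_mul_sqrt P (fun p => ‖p - μc (cl p)‖) (fun p => ‖p - σ p‖)
        rwa [hu2, hc2] at h
      have hbig : M^2*((∑ j : Fin k, ((Cj j).card : ℝ) * pcost (μc j) S) + Δ - scost P S)
          ≤ 4*t*M*Δ + 4*t*M*(Real.sqrt Δ * Real.sqrt (scost P S)) + 8*t^2*Δ := by
        rw [hXeq, Finset.mul_sum]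
        calc ∑ p ∈ P, M^2*(‖p - s (cl p)‖^2 - pcost p S)
            ≤ ∑ p ∈ P, (4*t*M*‖p - μc (cl p)‖^2 + 4*t*M*(‖p - μc (cl p)‖*‖p - σ p‖)
              + 8*t^2*‖p - μc (cl p)‖^2) := Finset.sum_le_sum hpt
          _ = 4*t*M*(∑ p ∈ P, ‖p - μc (cl p)‖^2)
              + 4*t*M*(∑ p ∈ P, ‖p - μc (cl p)‖*‖p - σ p‖)
              + 8*t^2*(∑ p ∈ P, ‖p - μc (cl p)‖^2) := by
            rw [Finset.sum_add_distrib, Finset.sum_add_distrib, ← Finset.mul_sum,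
              ← Finset.mul_sum, ← Finset.mul_sum]
          _ ≤ _ := by
            rw [hu2]
            have h1 : 0 ≤ 4*t*M := by nlinarith only [mul_pos ht0 hM0]
            linarith only [mul_le_mul_of_nonneg_left hsumCS h1]
      have hend := endgame (Real.sqrt Δ) (Real.sqrt (scost P S)) ε K t M hapos hab hε0 hε1
        hcaseB hK22 hK23 ht hM
      rw [ha2, hb2] at hend
      have hfin : M^2*((∑ j : Fin k, ((Cj j).card : ℝ) * pcost (μc j) S) + Δ - scost P S)
          ≤ M^2*(ε * scost P S) := by linarith only [hbig, hend]
      exact le_of_mul_le_mul_left hfin (pow_pos hM0 2)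
end
end

section
/- Let S ⊂ ℝ^d be a finite set of centers and let C_j ⊂ ℝ^d be a finite set of points with a designated point a_j, and let Δ_j := (∑_{p∈C_j} ‖p−a_j‖²)/|C_j|. If cost(a_j,S) ≥ 32·Δ_j, then cost(C_j,S) ≥ (1/6)·|C_j|·cost(a_j,S), where cost(C_j,S) := ∑_{p∈C_j} min_{s∈S} ‖p−s‖² and cost(a_j,S) := min_{s∈S} ‖a_j−s‖². -/
open Finset

noncomputable section

lemma pcost_key {d : ℕ} (p aj : Pt d) (S : Finset (Pt d)) (hS : S.Nonempty) :
    pcost aj S / 2 - ‖p - aj‖ ^ 2 ≤ pcost p S := by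
  apply le_csInf
  · exact ⟨‖p - hS.choose‖ ^ 2, ⟨hS.choose, hS.choose_spec, rfl⟩⟩
  rintro b ⟨s, hs, rfl⟩
  have h1 : pcost aj S ≤ ‖aj - s‖ ^ 2 := by
    apply csInf_le
    · refine ⟨0, ?_⟩
      rintro x ⟨t, _, rfl⟩
      positivity
    · exact ⟨s, hs, rfl⟩
  have htri : ‖aj - s‖ ≤ ‖aj - p‖ + ‖p - s‖ := norm_sub_le_norm_sub_add_norm_sub _ _ _
  have hrev : ‖aj - p‖ = ‖p - aj‖ := norm_sub_rev _ _
  nlinarith [sq_nonneg (‖p - aj‖ - ‖p - s‖), norm_nonneg (aj - s), norm_nonneg (p - aj),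
    norm_nonneg (p - s)]

/-- If the center `aj` of a cluster `Cj` with average cost `Δj` satisfies
`cost(aj,S) ≥ 32·Δj`, then `cost(Cj,S) ≥ (1/6)·|Cj|·cost(aj,S)`. -/
theorem cost_from_center {d : ℕ} (S Cj : Finset (Pt d)) (aj : Pt d)
    (hfar : 32 * ((∑ p ∈ Cj, ‖p - aj‖ ^ 2) / (Cj.card : ℝ)) ≤ pcost aj S) :
    (1 / 6 : ℝ) * (Cj.card : ℝ) * pcost aj S ≤ ∑ p ∈ Cj, pcost p S := by
  rcases Cj.eq_empty_or_nonempty with rfl | hC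
  · simp
  rcases S.eq_empty_or_nonempty with rfl | hS
  · have h0 : pcost aj ∅ = 0 := by simp [pcost, Real.sInf_empty]
    have : ∀ p ∈ Cj, pcost p (∅ : Finset (Pt d)) = 0 := by
      intro p _; simp [pcost, Real.sInf_empty]
    rw [h0, Finset.sum_congr rfl this]
    simp
  have hn : (0 : ℝ) < (Cj.card : ℝ) := by exact_mod_cast Finset.card_pos.mpr hC
  set c := pcost aj S with hc
  have hcnn : 0 ≤ c := pcost_nonneg aj S
  have hsum : (∑ p ∈ Cj, ‖p - aj‖ ^ 2) ≤ (Cj.card : ℝ) * c / 32 := by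
    have h' : (∑ p ∈ Cj, ‖p - aj‖ ^ 2) / (Cj.card : ℝ) ≤ c / 32 := by linarith
    rw [div_le_iff₀ hn] at h'
    linarith
  have hkey : ∀ p ∈ Cj, c / 2 - ‖p - aj‖ ^ 2 ≤ pcost p S := fun p _ => pcost_key p aj S hS
  have h2 : ∑ p ∈ Cj, (c / 2 - ‖p - aj‖ ^ 2) ≤ ∑ p ∈ Cj, pcost p S :=
    Finset.sum_le_sum hkey
  rw [Finset.sum_sub_distrib, Finset.sum_const, nsmul_eq_mul] at h2
  nlinarith [h2, hsum, mul_nonneg hn.le hcnn]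
end
end

section
/- There is an absolute constant C > 0 such that the following holds. Let Ω ⊂ ℝ^d be a finite non-empty set, let x ∈ ℝ^d, let α ∈ (0,1), and let U_0 ⊂ ℝ^d be any finite set. Then there exists a subset R(x) ⊆ Ω with |R(x)| ≤ C/α², containing a point of Ω nearest to x, such that if Π denotes the orthogonal projection of ℝ^d onto the linear span of U_0 ∪ R(x), then for every q ∈ Ω: |⟨q, x⟩ − ⟨Πq, x⟩| ≤ α · ‖q − Πq‖ · min_{q'∈Ω} ‖q' − x‖. -/
open Finset
open scoped RealInnerProductSpace

noncomputable section

lemma proj_min' {E : Type*} [NormedAddCommGroup E] [InnerProductSpace ℝ E]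
    (K : Submodule ℝ E) [K.HasOrthogonalProjection] (x v : E) (hv : v ∈ K) :
    ‖x - (Submodule.orthogonalProjectionOnto K x : E)‖ ≤ ‖x - v‖ := by
  have h1 : ⟪x - (Submodule.orthogonalProjectionOnto K x : E), (Submodule.orthogonalProjectionOnto K x : E) - v⟫ = 0 :=
    Submodule.starProjection_inner_eq_zero x _ (K.sub_mem (Submodule.orthogonalProjectionOnto K x).2 hv)
  have h2 := norm_add_sq_real (x - (Submodule.orthogonalProjectionOnto K x : E))
      ((Submodule.orthogonalProjectionOnto K x : E) - v)
  rw [h1, sub_add_sub_cancel] at h2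
  nlinarith [norm_nonneg (x - v), norm_nonneg (x - (Submodule.orthogonalProjectionOnto K x : E)),
    sq_nonneg ‖(Submodule.orthogonalProjectionOnto K x : E) - v‖]

lemma aux (d : ℕ) (Ω : Finset (Pt d)) (x : Pt d) (α r : ℝ) (U₀ : Finset (Pt d))
    (hα : 0 < α) (hr : 0 ≤ r) (n : ℕ) :
    ∀ R : Finset (Pt d), R ⊆ Ω →
      ‖x - (Submodule.orthogonalProjectionOnto
          (Submodule.span ℝ ((U₀ : Set (Pt d)) ∪ (R : Set (Pt d)))) x : Pt d)‖ ^ 2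
        ≤ n * (α * r) ^ 2 →
      ∃ R' : Finset (Pt d), R ⊆ R' ∧ R' ⊆ Ω ∧ R'.card ≤ R.card + n ∧
        ∀ q ∈ Ω,
          |⟪q, x⟫ - ⟪(Submodule.orthogonalProjectionOnto
              (Submodule.span ℝ ((U₀ : Set (Pt d)) ∪ (R' : Set (Pt d)))) q : Pt d), x⟫|
            ≤ α * ‖q - (Submodule.orthogonalProjectionOnto
              (Submodule.span ℝ ((U₀ : Set (Pt d)) ∪ (R' : Set (Pt d)))) q : Pt d)‖ * r := by
  classical
  induction n with
  | zero =>
    intro R hRΩ hx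
    set K := Submodule.span ℝ ((U₀ : Set (Pt d)) ∪ (R : Set (Pt d))) with hK
    refine ⟨R, le_refl _, hRΩ, by simp, ?_⟩
    intro q hq
    norm_num at hx
    have hx0 : x - (Submodule.orthogonalProjectionOnto K x : Pt d) = 0 := by
      have h : ‖x - (Submodule.orthogonalProjectionOnto K x : Pt d)‖ = 0 := by
        rw [show (Submodule.orthogonalProjectionOnto K x : Pt d) = K.starProjection x from rfl, hx,
          norm_zero]
      simpa using h
    have hxeq : x = (Submodule.orthogonalProjectionOnto K x : Pt d) := sub_eq_zero.mp hx0
    have hz : ⟪q - (Submodule.orthogonalProjectionOnto K q : Pt d), x⟫ = 0 := by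
      conv_lhs => rw [hxeq]
      exact Submodule.starProjection_inner_eq_zero q _ (Submodule.orthogonalProjectionOnto K x).2
    rw [← inner_sub_left, hz]
    simp only [abs_zero]
    positivity
  | succ n ih =>
    intro R hRΩ hx
    set K := Submodule.span ℝ ((U₀ : Set (Pt d)) ∪ (R : Set (Pt d))) with hK
    by_cases h : ∀ q ∈ Ω,
        |⟪q, x⟫ - ⟪(Submodule.orthogonalProjectionOnto K q : Pt d), x⟫|
          ≤ α * ‖q - (Submodule.orthogonalProjectionOnto K q : Pt d)‖ * r
    · exact ⟨R, le_refl _, hRΩ, Nat.le_add_right _ _, h⟩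
    push_neg at h
    obtain ⟨q, hqΩ, hviol⟩ := h
    set u := q - (Submodule.orthogonalProjectionOnto K q : Pt d) with hu
    have hvi : α * ‖u‖ * r < |⟪u, x⟫| := by
      rw [hu, inner_sub_left]; exact hviol
    have hu0 : u ≠ 0 := by
      intro h0
      rw [h0, inner_zero_left, norm_zero, abs_zero, mul_zero, zero_mul] at hvi
      exact lt_irrefl 0 hvi
    have hun : (0:ℝ) < ‖u‖ ^ 2 := pow_pos (norm_pos_iff.mpr hu0) 2
    set K' := Submodule.span ℝ ((U₀ : Set (Pt d)) ∪ ((insert q R : Finset (Pt d)) : Set (Pt d)))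
      with hK'
    have hKK' : K ≤ K' := by
      apply Submodule.span_mono
      intro y hy
      rcases hy with hy | hy
      · exact Or.inl hy
      · exact Or.inr (by simp only [Finset.coe_insert, Set.mem_insert_iff]; exact Or.inr hy)
    have hqK' : q ∈ K' := Submodule.subset_span (Or.inr (by simp))
    have huK' : u ∈ K' := K'.sub_mem hqK' (hKK' (Submodule.orthogonalProjectionOnto K q).2)
    set c := ⟪u, x⟫ / ‖u‖ ^ 2 with hc
    set v := (Submodule.orthogonalProjectionOnto K x : Pt d) + c • u with hv
    have hvK' : v ∈ K' := K'.add_mem (hKK' (Submodule.orthogonalProjectionOnto K x).2) (K'.smul_mem c huK')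
    have hiux : ⟪x - (Submodule.orthogonalProjectionOnto K x : Pt d), u⟫ = ⟪u, x⟫ := by
      have h1 : ⟪u, (Submodule.orthogonalProjectionOnto K x : Pt d)⟫ = 0 :=
        Submodule.starProjection_inner_eq_zero q _ (Submodule.orthogonalProjectionOnto K x).2
      rw [real_inner_comm, inner_sub_right, h1, sub_zero]
    have hxv : ‖x - v‖ ^ 2
        = ‖x - (Submodule.orthogonalProjectionOnto K x : Pt d)‖ ^ 2 - ⟪u, x⟫ ^ 2 / ‖u‖ ^ 2 := by
      have hxveq : x - v = (x - (Submodule.orthogonalProjectionOnto K x : Pt d)) - c • u := by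
        rw [hv]; abel
      rw [hxveq, norm_sub_sq_real, real_inner_smul_right, hiux, norm_smul,
        Real.norm_eq_abs, mul_pow, sq_abs, hc]
      field_simp
      ring
    have hsq : (α * r) ^ 2 < ⟪u, x⟫ ^ 2 / ‖u‖ ^ 2 := by
      rw [lt_div_iff₀ hun]
      have h1 : (0:ℝ) ≤ α * ‖u‖ * r := by positivity
      nlinarith [abs_nonneg ⟪u, x⟫, sq_abs ⟪u, x⟫]
    have hnext : ‖x - (Submodule.orthogonalProjectionOnto K' x : Pt d)‖ ^ 2 ≤ n * (α * r) ^ 2 := by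
      have hle := proj_min' K' x v hvK'
      have h2 : ‖x - (Submodule.orthogonalProjectionOnto K' x : Pt d)‖ ^ 2 ≤ ‖x - v‖ ^ 2 :=
        pow_le_pow_left₀ (norm_nonneg _) hle 2
      push_cast at hx ⊢
      linarith [h2, hxv, hsq, hx]
    obtain ⟨R', hsub, hR'Ω, hcard, hineq⟩ := ih (insert q R) (by
      intro y hy
      rcases Finset.mem_insert.mp hy with h | h
      · exact h ▸ hqΩ
      · exact hRΩ h) hnext
    refine ⟨R', le_trans (Finset.subset_insert q R) hsub, hR'Ω, ?_, hineq⟩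
    calc R'.card ≤ (insert q R).card + n := hcard
      _ ≤ R.card + 1 + n := Nat.add_le_add_right (Finset.card_insert_le q R) n
      _ = R.card + (n + 1) := by ring

/-- Dimension reduction lemma: any set `U₀` can be augmented by `O(1/α²)` points of `Ω`
(including a point of `Ω` nearest to `x`) so that projecting onto the span of the
augmented set almost preserves inner products with `x`. -/
theorem subspace_augmentation :
    ∃ C : ℝ, 0 < C ∧
      ∀ (d : ℕ) (Ω : Finset (Pt d)) (x : Pt d) (α : ℝ) (U₀ : Finset (Pt d))
        (hΩ : Ω.Nonempty), 0 < α → α < 1 →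
        ∃ R : Finset (Pt d), R ⊆ Ω ∧ (R.card : ℝ) ≤ C / α ^ 2 ∧
          (∃ q₀ ∈ R, ∀ q' ∈ Ω, ‖q₀ - x‖ ≤ ‖q' - x‖) ∧
          ∀ q ∈ Ω,
            abs (⟪q, x⟫ -
                ⟪(Submodule.orthogonalProjectionOnto
                    (Submodule.span ℝ ((U₀ : Set (Pt d)) ∪ (R : Set (Pt d)))) q : Pt d),
                  x⟫)
              ≤ α * ‖q - (Submodule.orthogonalProjectionOnto
                    (Submodule.span ℝ ((U₀ : Set (Pt d)) ∪ (R : Set (Pt d)))) q : Pt d)‖ *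
                  (Ω.inf' hΩ fun q' => ‖q' - x‖) := by
  refine ⟨3, by norm_num, ?_⟩
  intro d Ω x α U₀ hΩ hα hα1
  classical
  set r : ℝ := Ω.inf' hΩ fun q' => ‖q' - x‖ with hrdef
  have hr : 0 ≤ r := Finset.le_inf' hΩ _ fun q' _ => norm_nonneg _
  obtain ⟨q₀, hq₀Ω, hq₀min⟩ := Ω.exists_min_image (fun q' => ‖q' - x‖) hΩ
  have hrq₀ : r = ‖q₀ - x‖ :=
    le_antisymm (Finset.inf'_le _ hq₀Ω) (Finset.le_inf' hΩ _ fun q' hq' => hq₀min q' hq')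
  set n₀ : ℕ := ⌈(α ^ 2)⁻¹⌉₊ with hn₀
  have hα2 : (0:ℝ) < α ^ 2 := by positivity
  have hn₀ge : (α ^ 2)⁻¹ ≤ (n₀ : ℝ) := Nat.le_ceil _
  have hn₀lt : (n₀ : ℝ) < (α ^ 2)⁻¹ + 1 := Nat.ceil_lt_add_one (by positivity)
  -- initial bound
  have hinit : ‖x - (Submodule.orthogonalProjectionOnto
      (Submodule.span ℝ ((U₀ : Set (Pt d)) ∪ (({q₀} : Finset (Pt d)) : Set (Pt d)))) x
        : Pt d)‖ ^ 2 ≤ n₀ * (α * r) ^ 2 := by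
    have hq₀mem : q₀ ∈ Submodule.span ℝ
        ((U₀ : Set (Pt d)) ∪ (({q₀} : Finset (Pt d)) : Set (Pt d))) :=
      Submodule.subset_span (Or.inr (by simp))
    have h1 := proj_min' _ x q₀ hq₀mem
    have h2 : ‖x - q₀‖ = r := by rw [hrq₀, norm_sub_rev]
    have h3 : ‖x - (Submodule.orthogonalProjectionOnto
        (Submodule.span ℝ ((U₀ : Set (Pt d)) ∪ (({q₀} : Finset (Pt d)) : Set (Pt d)))) x
          : Pt d)‖ ^ 2 ≤ r ^ 2 := by
      rw [← h2]
      exact pow_le_pow_left₀ (norm_nonneg _) h1 2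
    have h4 : r ^ 2 ≤ n₀ * (α * r) ^ 2 := by
      have : (1:ℝ) ≤ n₀ * α ^ 2 := by
        have h := mul_le_mul_of_nonneg_right hn₀ge hα2.le
        rwa [inv_mul_cancel₀ hα2.ne'] at h
      nlinarith [sq_nonneg r]
    linarith
  obtain ⟨R, hsub, hRΩ, hcard, hineq⟩ := aux d Ω x α r U₀ hα hr n₀ {q₀}
    (Finset.singleton_subset_iff.mpr hq₀Ω) hinit
  refine ⟨R, hRΩ, ?_, ⟨q₀, hsub (Finset.mem_singleton_self q₀), hq₀min⟩, hineq⟩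
  have hc : (R.card : ℝ) ≤ 1 + n₀ := by
    have := hcard
    simp only [Finset.card_singleton] at this
    exact_mod_cast this
  have hinv1 : (1:ℝ) ≤ (α ^ 2)⁻¹ := by
    rw [le_inv_comm₀ (by norm_num) hα2]
    nlinarith
  rw [div_eq_mul_inv]
  nlinarith [hc, hn₀lt, hinv1]
end
end

section
/- Let P ⊂ ℝ^d be a finite set partitioned into clusters C_1,…,C_k with centers a_1,…,a_k, write A = {a_1,…,a_k} and cost(C_j,A) = ∑_{p∈C_j} ‖p−a_j‖². Let ε ∈ (0,1/2] and let Ω ⊆ P be a finite set with non-negative weights (w_q)_{q∈Ω} satisfying: (P1) ∑_{q∈Ω∩C_j} w_q ∈ [(1−ε)|C_j|, (1+ε)|C_j|] for each j, and (P3) ∑_{q∈Ω∩C_j} w_q·‖q−a_j‖² ∈ [(1−ε)cost(C_j,A), (1+ε)cost(C_j,A)] for each j. Then for every finite set S of centers in ℝ^d, cost_Ω(P,S) ≤ 9·cost(P,A) + 6·cost(P,S). -/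
open Finset

noncomputable section

lemma pcost_tri {d : ℕ} (x y : Pt d) (S : Finset (Pt d)) :
    pcost x S ≤ 2 * ‖x - y‖ ^ 2 + 2 * pcost y S := by
  rcases S.eq_empty_or_nonempty with rfl | hS
  · simp [pcost, Real.sInf_empty]
  · have h : (pcost x S - 2 * ‖x - y‖ ^ 2) / 2 ≤ pcost y S := by
      apply le_csInf
      · exact ⟨_, hS.choose, hS.choose_spec, rfl⟩
      · rintro z ⟨s, hs, rfl⟩
        show (pcost x S - 2 * ‖x - y‖ ^ 2) / 2 ≤ ‖y - s‖ ^ 2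
        have h1 : pcost x S ≤ ‖x - s‖ ^ 2 := pcost_le x hs
        have h2 : ‖x - s‖ ≤ ‖x - y‖ + ‖y - s‖ := by
          have := norm_sub_le_norm_sub_add_norm_sub x y s
          linarith [this]
        have h3 : ‖x - s‖ ^ 2 ≤ (‖x - y‖ + ‖y - s‖) ^ 2 :=
          pow_le_pow_left₀ (norm_nonneg _) h2 2
        nlinarith [sq_nonneg (‖x - y‖ - ‖y - s‖)]
    linarith

/-- If a weighted subset `Ω ⊆ P` preserves the sizes (P1) and the costs (P3) of all
clusters up to `1 ± ε`, then for every solution `S`,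
`cost_Ω(P,S) ≤ 9·cost(P,A) + 6·cost(P,S)`. -/
theorem coreset_cost_upper_bound_under_eventE
    {d : ℕ} (k : ℕ) (ε : ℝ) (P : Finset (Pt d)) (cl : Pt d → Fin k)
    (a : Fin k → Pt d) (Ω : Finset (Pt d)) (w : Pt d → ℝ)
    (hε0 : 0 < ε) (hε1 : ε ≤ 1 / 2)
    (hΩ : Ω ⊆ P) (hw : ∀ q ∈ Ω, 0 ≤ w q)
    -- (P1) cluster size preservation
    (hP1 : ∀ j : Fin k,
      (1 - ε) * (((P.filter fun p => cl p = j).card : ℝ))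
          ≤ ∑ q ∈ Ω.filter (fun q => cl q = j), w q ∧
      ∑ q ∈ Ω.filter (fun q => cl q = j), w q
          ≤ (1 + ε) * (((P.filter fun p => cl p = j).card : ℝ)))
    -- (P3) cluster cost preservation
    (hP3 : ∀ j : Fin k,
      (1 - ε) * (∑ p ∈ P.filter (fun p => cl p = j), ‖p - a j‖ ^ 2)
          ≤ ∑ q ∈ Ω.filter (fun q => cl q = j), w q * ‖q - a j‖ ^ 2 ∧
      ∑ q ∈ Ω.filter (fun q => cl q = j), w q * ‖q - a j‖ ^ 2
          ≤ (1 + ε) * (∑ p ∈ P.filter (fun p => cl p = j), ‖p - a j‖ ^ 2)) :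
    ∀ S : Finset (Pt d),
      (∑ q ∈ Ω, w q * pcost q S)
        ≤ 9 * (∑ j : Fin k, ∑ p ∈ P.filter (fun p => cl p = j), ‖p - a j‖ ^ 2)
          + 6 * scost P S := by
  intro S
  have hsplit : (∑ q ∈ Ω, w q * pcost q S)
      = ∑ j : Fin k, ∑ q ∈ Ω.filter (fun q => cl q = j), w q * pcost q S :=
    (Finset.sum_fiberwise Ω cl (fun q => w q * pcost q S)).symm
  have hsplitE : scost P S
      = ∑ j : Fin k, ∑ p ∈ P.filter (fun p => cl p = j), pcost p S :=
    (Finset.sum_fiberwise P cl (fun p => pcost p S)).symm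
  rw [hsplit, hsplitE]
  rw [Finset.mul_sum, Finset.mul_sum, ← Finset.sum_add_distrib]
  apply Finset.sum_le_sum
  intro j _
  set D := ∑ p ∈ P.filter (fun p => cl p = j), ‖p - a j‖ ^ 2 with hD
  set E := ∑ p ∈ P.filter (fun p => cl p = j), pcost p S with hE
  set W := ∑ q ∈ Ω.filter (fun q => cl q = j), w q with hW
  set WC := ∑ q ∈ Ω.filter (fun q => cl q = j), w q * ‖q - a j‖ ^ 2 with hWC
  set N : ℝ := ((P.filter fun p => cl p = j).card : ℝ) with hN
  set c := pcost (a j) S with hc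
  have hD0 : 0 ≤ D := Finset.sum_nonneg fun p _ => by positivity
  have hE0 : 0 ≤ E := Finset.sum_nonneg fun p _ => pcost_nonneg p S
  have hc0 : 0 ≤ c := pcost_nonneg _ _
  have hN0 : 0 ≤ N := Nat.cast_nonneg _
  have step1 : (∑ q ∈ Ω.filter (fun q => cl q = j), w q * pcost q S)
      ≤ 2 * WC + 2 * W * c := by
    have : (∑ q ∈ Ω.filter (fun q => cl q = j), w q * pcost q S)
        ≤ ∑ q ∈ Ω.filter (fun q => cl q = j), w q * (2 * ‖q - a j‖ ^ 2 + 2 * c) := by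
      apply Finset.sum_le_sum
      intro q hq
      have hq' : q ∈ Ω := Finset.mem_filter.mp hq |>.1
      exact mul_le_mul_of_nonneg_left (pcost_tri q (a j) S) (hw q hq')
    calc (∑ q ∈ Ω.filter (fun q => cl q = j), w q * pcost q S)
        ≤ ∑ q ∈ Ω.filter (fun q => cl q = j), w q * (2 * ‖q - a j‖ ^ 2 + 2 * c) := this
      _ = 2 * WC + 2 * W * c := by
          rw [hWC, hW, Finset.mul_sum, Finset.mul_sum, Finset.sum_mul,
            ← Finset.sum_add_distrib]
          apply Finset.sum_congr rfl
          intro q _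
          ring
  have step2 : N * c ≤ 2 * D + 2 * E := by
    have : N * c = ∑ p ∈ P.filter (fun p => cl p = j), c := by
      rw [Finset.sum_const, nsmul_eq_mul, hN]
    rw [this, hD, hE, Finset.mul_sum, Finset.mul_sum, ← Finset.sum_add_distrib]
    apply Finset.sum_le_sum
    intro p _
    have := pcost_tri (a j) p S
    have hsym : ‖a j - p‖ = ‖p - a j‖ := norm_sub_rev _ _
    rw [hsym] at this
    linarith
  have h3 := (hP3 j).2
  have h1 := (hP1 j).2
  nlinarith [mul_le_mul_of_nonneg_right h1 hc0]
end
end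

section
/- There is an absolute constant C > 0 such that the following holds. Let ε ∈ (0,1/2], let P ⊂ ℝ^d be a finite set partitioned into clusters C_1,…,C_k with centers a_1,…,a_k, and let Ω ⊆ P with non-negative weights satisfy event E. Let S ⊂ ℝ^d be a finite set of centers and let C_j be a cluster that is far from S, i.e. cost(a_j,S) > Δ_j·ε^{-2} where Δ_j := cost(C_j,a_j)/|C_j|. Then |cost(C_j,S) − cost_Ω(C_j,S)| ≤ C·ε·cost(C_j,S), where cost_Ω(C_j,S) := ∑_{q∈Ω∩C_j} w_q·cost(q,S). -/
open Finset

noncomputable section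

/-- `ℓ_max = ⌊log₂(1/ε)⌋`. -/
def lmax (ε : ℝ) : ℕ := (Int.log 2 ε⁻¹).toNat

/-- `p` belongs to the ring `R_j(ℓ)` of cluster `C_j` (where `C_j = {x ∈ P | cl x = j}`,
with center `a j` and average cost `Δ_j`). -/
def inRing {d k : ℕ} (P : Finset (Pt d)) (cl : Pt d → Fin k) (a : Fin k → Pt d)
    (ε : ℝ) (j : Fin k) (ℓ : ℕ) (p : Pt d) : Prop :=
  let Δ : ℝ := (∑ x ∈ P.filter (fun x => cl x = j), ‖x - a j‖ ^ 2) /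
      (((P.filter fun x => cl x = j).card : ℝ))
  cl p = j ∧
    ((ℓ = 0 ∧ ‖p - a j‖ ^ 2 < 2 * Δ) ∨
     (1 ≤ ℓ ∧ ℓ ≤ lmax ε ∧
        2 ^ ℓ * Δ ≤ ‖p - a j‖ ^ 2 ∧ ‖p - a j‖ ^ 2 < 2 ^ (ℓ + 1) * Δ) ∨
     (ℓ = lmax ε + 1 ∧ 2 ^ (lmax ε + 1) * Δ ≤ ‖p - a j‖ ^ 2))

lemma sqrt_pcost_le {d : ℕ} {S : Finset (Pt d)} (hS : S.Nonempty) (p b : Pt d) :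
    Real.sqrt (pcost p S) ≤ Real.sqrt (pcost b S) + ‖p - b‖ := by
  obtain ⟨s, hs, he⟩ := pcost_exists b hS
  have h1 : ‖p - s‖ ≤ ‖p - b‖ + ‖b - s‖ := norm_sub_le_norm_sub_add_norm_sub p b s
  have h2 : pcost p S ≤ (‖p - b‖ + ‖b - s‖) ^ 2 := by
    refine le_trans (pcost_le p hs) ?_
    have : (0:ℝ) ≤ ‖p - s‖ := norm_nonneg _
    nlinarith [norm_nonneg (p - b), norm_nonneg (b - s)]
  have h3 : Real.sqrt (pcost p S) ≤ ‖p - b‖ + ‖b - s‖ := by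
    calc Real.sqrt (pcost p S) ≤ Real.sqrt ((‖p - b‖ + ‖b - s‖) ^ 2) := Real.sqrt_le_sqrt h2
    _ = ‖p - b‖ + ‖b - s‖ := Real.sqrt_sq (by positivity)
  have h4 : Real.sqrt (pcost b S) = ‖b - s‖ := by
    rw [he, Real.sqrt_sq (norm_nonneg _)]
  linarith

lemma pcost_diff_le {d : ℕ} {S : Finset (Pt d)} (hS : S.Nonempty) (p b : Pt d) :
    |pcost p S - pcost b S| ≤ 2 * Real.sqrt (pcost b S) * ‖p - b‖ + ‖p - b‖ ^ 2 := by
  set gp := Real.sqrt (pcost p S) with hgp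
  set gb := Real.sqrt (pcost b S) with hgb
  have hp : gp ^ 2 = pcost p S := Real.sq_sqrt (pcost_nonneg p S)
  have hb : gb ^ 2 = pcost b S := Real.sq_sqrt (pcost_nonneg b S)
  have h1 : gp ≤ gb + ‖p - b‖ := sqrt_pcost_le hS p b
  have h2 : gb ≤ gp + ‖p - b‖ := by
    have := sqrt_pcost_le hS b p
    rwa [norm_sub_rev] at this
  have hgp0 : 0 ≤ gp := Real.sqrt_nonneg _
  have hgb0 : 0 ≤ gb := Real.sqrt_nonneg _
  have hr : 0 ≤ ‖p - b‖ := norm_nonneg _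
  rw [abs_le]
  constructor <;> nlinarith

lemma le_of_sq_le_sq' {a b : ℝ} (ha : 0 ≤ a) (hb : 0 ≤ b) (h : a ^ 2 ≤ b ^ 2) : a ≤ b := by
  nlinarith

set_option maxHeartbeats 1000000 in
/-- Far-cluster lemma: if `Ω` satisfies event `E` (properties P1, P2, P3), then for any
solution `S` and any cluster `C_j` far from `S`, the coreset preserves the cost of `C_j`
up to a `C·ε` relative error. -/
theorem far_cluster_cost_preserved :
    ∃ C : ℝ, 0 < C ∧
      ∀ (d k : ℕ) (ε : ℝ) (P : Finset (Pt d)) (cl : Pt d → Fin k) (a : Fin k → Pt d)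
        (Ω : Finset (Pt d)) (w : Pt d → ℝ) (j : Fin k) (S : Finset (Pt d)),
        0 < ε → ε ≤ 1 / 2 → Ω ⊆ P → (∀ q ∈ Ω, 0 ≤ w q) →
        -- (P1) cluster size preservation
        (∀ j' : Fin k,
          (1 - ε) * (((P.filter fun p => cl p = j').card : ℝ))
              ≤ ∑ q ∈ Ω.filter (fun q => cl q = j'), w q ∧
          ∑ q ∈ Ω.filter (fun q => cl q = j'), w q
              ≤ (1 + ε) * (((P.filter fun p => cl p = j').card : ℝ))) →
        -- (P2) ring size preservation
        (∀ j' : Fin k, ∀ ℓ ≤ lmax ε + 1,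
          (∑ q ∈ Ω, Set.indicator {q : Pt d | inRing P cl a ε j' ℓ q} w q)
            ≤ (((P.filter fun p => cl p = j').card : ℝ)) / 2 ^ ((ℓ : ℤ) - 1)) →
        -- (P3) cluster cost preservation
        (∀ j' : Fin k,
          (1 - ε) * (∑ p ∈ P.filter (fun p => cl p = j'), ‖p - a j'‖ ^ 2)
              ≤ ∑ q ∈ Ω.filter (fun q => cl q = j'), w q * ‖q - a j'‖ ^ 2 ∧
          ∑ q ∈ Ω.filter (fun q => cl q = j'), w q * ‖q - a j'‖ ^ 2
              ≤ (1 + ε) * (∑ p ∈ P.filter (fun p => cl p = j'), ‖p - a j'‖ ^ 2)) →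
        -- `C_j` is far from `S`: `cost(a_j,S) > Δ_j·ε^{-2}`
        ((∑ p ∈ P.filter (fun p => cl p = j), ‖p - a j‖ ^ 2) /
            (((P.filter fun p => cl p = j).card : ℝ)) * ε ^ (-2 : ℤ)
          < pcost (a j) S) →
        |(∑ p ∈ P.filter (fun p => cl p = j), pcost p S) -
            ∑ q ∈ Ω.filter (fun q => cl q = j), w q * pcost q S|
          ≤ C * ε * ∑ p ∈ P.filter (fun p => cl p = j), pcost p S := by
  refine ⟨40, by norm_num, ?_⟩
  intro d k ε P cl a Ω w j S hε hεhalf hΩP hw hP1 _hP2 hP3 hfar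
  classical
  set Cj := P.filter (fun p => cl p = j) with hCjdef
  set Ωj := Ω.filter (fun q => cl q = j) with hΩjdef
  set n : ℝ := (Cj.card : ℝ) with hndef
  set T : ℝ := ∑ p ∈ Cj, ‖p - a j‖ ^ 2 with hTdef
  set D : ℝ := pcost (a j) S with hDdef
  set A : ℝ := ∑ p ∈ Cj, pcost p S with hAdef
  set B : ℝ := ∑ q ∈ Ωj, w q * pcost q S with hBdef
  have hwΩ : ∀ q ∈ Ωj, 0 ≤ w q := fun q hq => hw q (Finset.mem_filter.mp hq).1
  have hT0 : 0 ≤ T := by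
    rw [hTdef]; exact Finset.sum_nonneg fun p _ => by positivity
  have hn0 : (0:ℝ) ≤ n := by rw [hndef]; exact Nat.cast_nonneg _
  have hD0 : 0 ≤ D := pcost_nonneg _ _
  have hA0 : 0 ≤ A := by
    rw [hAdef]; exact Finset.sum_nonneg fun p _ => pcost_nonneg _ _
  have hε2 : (0:ℝ) < ε ^ 2 := by positivity
  have hzpow : ε ^ (-2 : ℤ) = (ε ^ 2)⁻¹ := by
    rw [zpow_neg, zpow_two, sq]
  rw [hzpow, ← div_eq_mul_inv] at hfar
  have hDpos : 0 < D :=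
    lt_of_le_of_lt (div_nonneg (div_nonneg hT0 hn0) hε2.le) hfar
  have hS : S.Nonempty := by
    by_contra h
    rw [Finset.not_nonempty_iff_eq_empty] at h
    have : D = 0 := by simp [hDdef, h, pcost]
    rw [this] at hDpos; exact lt_irrefl _ hDpos
  -- instantiate P1, P3 at j
  have h1 := hP1 j
  rw [← hΩjdef, ← hCjdef, ← hndef] at h1
  have h3 := hP3 j
  rw [← hΩjdef, ← hCjdef, ← hTdef] at h3
  set W : ℝ := ∑ q ∈ Ωj, w q with hWdef
  set Tw : ℝ := ∑ q ∈ Ωj, w q * ‖q - a j‖ ^ 2 with hTwdef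
  rcases Nat.eq_zero_or_pos Cj.card with hcard | hcard
  · -- empty cluster
    have hCjE : Cj = ∅ := Finset.card_eq_zero.mp hcard
    have hnz : n = 0 := by rw [hndef, hcard]; norm_num
    have hWz : W = 0 := by
      have hle : W ≤ 0 := by
        have := h1.2; rw [hnz] at this; linarith
      have hge : 0 ≤ W := Finset.sum_nonneg hwΩ
      linarith
    have hB0 : B = 0 := by
      rw [hBdef]
      apply Finset.sum_eq_zero
      intro q hq
      have hq0 : w q = 0 :=
        (Finset.sum_eq_zero_iff_of_nonneg hwΩ).mp hWz q hq
      rw [hq0, zero_mul]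
    have hAz : A = 0 := by rw [hAdef, hCjE, Finset.sum_empty]
    rw [hAz, hB0]
    simp
  · -- main case
    have hnpos : (0:ℝ) < n := by rw [hndef]; exact_mod_cast hcard
    have hfar2 : T / n < D * ε ^ 2 := (div_lt_iff₀ hε2).mp hfar
    have hTle : T ≤ D * ε ^ 2 * n := le_of_lt ((div_lt_iff₀ hnpos).mp hfar2)
    set sD : ℝ := Real.sqrt D with hsDdef
    have hsD2 : sD ^ 2 = D := by rw [hsDdef]; exact Real.sq_sqrt hD0
    have hsD0 : 0 ≤ sD := Real.sqrt_nonneg _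
    have hub : ∀ p : Pt d, |pcost p S - D| ≤ 2 * sD * ‖p - a j‖ + ‖p - a j‖ ^ 2 := by
      intro p; rw [hsDdef, hDdef]; exact pcost_diff_le hS p (a j)
    have hlb : ∀ p : Pt d, sD - ‖p - a j‖ ≤ Real.sqrt (pcost p S) := by
      intro p
      have h := sqrt_pcost_le hS (a j) p
      rw [norm_sub_rev] at h
      rw [hsDdef, hDdef]; linarith
    set R1 : ℝ := ∑ p ∈ Cj, ‖p - a j‖ with hR1def
    set Rw : ℝ := ∑ q ∈ Ωj, w q * ‖q - a j‖ with hRwdef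
    set G : ℝ := ∑ p ∈ Cj, Real.sqrt (pcost p S) with hGdef
    have hR10 : 0 ≤ R1 := by
      rw [hR1def]; exact Finset.sum_nonneg fun p _ => norm_nonneg _
    have hRw0 : 0 ≤ Rw := by
      rw [hRwdef]
      exact Finset.sum_nonneg fun q hq => mul_nonneg (hwΩ q hq) (norm_nonneg _)
    have hTw0 : 0 ≤ Tw := by
      rw [hTwdef]
      exact Finset.sum_nonneg fun q hq => mul_nonneg (hwΩ q hq) (by positivity)
    have hW0 : 0 ≤ W := Finset.sum_nonneg hwΩ
    -- Cauchy-Schwarz for the full cluster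
    have hCS1 : R1 ^ 2 ≤ n * T := by
      have h := Finset.sum_mul_sq_le_sq_mul_sq Cj (fun _ => (1:ℝ)) (fun p => ‖p - a j‖)
      simp only [one_mul, one_pow, Finset.sum_const, nsmul_eq_mul, mul_one] at h
      rw [← hR1def] at h
      calc R1 ^ 2 ≤ (Cj.card : ℝ) * ∑ p ∈ Cj, ‖p - a j‖ ^ 2 := h
        _ = n * T := by rw [hndef, hTdef]
    have hCS2 : Rw ^ 2 ≤ W * Tw := by
      have h := Finset.sum_mul_sq_le_sq_mul_sq Ωj (fun q => Real.sqrt (w q))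
        (fun q => Real.sqrt (w q) * ‖q - a j‖)
      have e1 : ∑ q ∈ Ωj, Real.sqrt (w q) * (Real.sqrt (w q) * ‖q - a j‖) = Rw := by
        rw [hRwdef]
        refine Finset.sum_congr rfl fun q hq => ?_
        rw [← mul_assoc, Real.mul_self_sqrt (hwΩ q hq)]
      have e2 : ∑ q ∈ Ωj, (Real.sqrt (w q)) ^ 2 = W := by
        rw [hWdef]
        exact Finset.sum_congr rfl fun q hq => Real.sq_sqrt (hwΩ q hq)
      have e3 : ∑ q ∈ Ωj, (Real.sqrt (w q) * ‖q - a j‖) ^ 2 = Tw := by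
        rw [hTwdef]
        refine Finset.sum_congr rfl fun q hq => ?_
        rw [mul_pow, Real.sq_sqrt (hwΩ q hq)]
      rw [e1, e2, e3] at h
      exact h
    have hCS3 : G ^ 2 ≤ n * A := by
      have h := Finset.sum_mul_sq_le_sq_mul_sq Cj (fun _ => (1:ℝ))
        (fun p => Real.sqrt (pcost p S))
      simp only [one_mul, one_pow, Finset.sum_const, nsmul_eq_mul, mul_one] at h
      have e : ∑ p ∈ Cj, (Real.sqrt (pcost p S)) ^ 2 = A := by
        rw [hAdef]
        exact Finset.sum_congr rfl fun p _ => Real.sq_sqrt (pcost_nonneg _ _)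
      rw [← hGdef, e, ← hndef] at h
      exact h
    -- bounds on R1, Rw
    have hR1le : R1 ≤ ε * n * sD := by
      refine le_of_sq_le_sq' hR10 (by positivity) ?_
      calc R1 ^ 2 ≤ n * T := hCS1
        _ ≤ n * (D * ε ^ 2 * n) := mul_le_mul_of_nonneg_left hTle hn0
        _ = (ε * n * sD) ^ 2 := by rw [← hsD2]; ring
    have hTwle : Tw ≤ (1 + ε) * T := h3.2
    have hRwle : Rw ≤ (1 + ε) * ε * n * sD := by
      refine le_of_sq_le_sq' hRw0 (by positivity) ?_
      calc Rw ^ 2 ≤ W * Tw := hCS2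
        _ ≤ ((1 + ε) * n) * ((1 + ε) * T) := by
            apply mul_le_mul h1.2 hTwle hTw0 (by positivity)
        _ ≤ ((1 + ε) * n) * ((1 + ε) * (D * ε ^ 2 * n)) := by
            apply mul_le_mul_of_nonneg_left _ (by positivity)
            exact mul_le_mul_of_nonneg_left hTle (by linarith)
        _ = ((1 + ε) * ε * n * sD) ^ 2 := by rw [← hsD2]; ring
    -- lower bound on A
    have hGlb : n * sD - R1 ≤ G := by
      have h := Finset.sum_le_sum (fun p (_ : p ∈ Cj) => hlb p)
      rw [Finset.sum_sub_distrib, Finset.sum_const, nsmul_eq_mul] at h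
      rw [hGdef, hR1def, hndef]
      exact h
    have hGlb2 : n * sD / 2 ≤ G := by
      have h := mul_le_mul_of_nonneg_right hεhalf (mul_nonneg hn0 hsD0)
      linarith [hR1le]
    have hA4 : n * D / 4 ≤ A := by
      have hG0 : 0 ≤ G := le_trans (by positivity) hGlb2
      have hG2 : (n * sD / 2) * (n * sD / 2) ≤ G * G :=
        mul_le_mul hGlb2 hGlb2 (by positivity) hG0
      have key : n * (n * sD ^ 2 / 4) ≤ n * A := by
        have hG2' : G * G = G ^ 2 := by ring
        linarith [hCS3, hG2]
      have := le_of_mul_le_mul_left key hnpos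
      rw [← hsD2]
      exact this
    -- upper bounds on deviations
    have hAnD : |A - n * D| ≤ 2 * sD * R1 + T := by
      have heq : ∑ p ∈ Cj, (pcost p S - D) = A - n * D := by
        rw [Finset.sum_sub_distrib, Finset.sum_const, nsmul_eq_mul, ← hAdef, ← hndef]
      calc |A - n * D| = |∑ p ∈ Cj, (pcost p S - D)| := by rw [heq]
        _ ≤ ∑ p ∈ Cj, |pcost p S - D| := Finset.abs_sum_le_sum_abs _ _
        _ ≤ ∑ p ∈ Cj, (2 * sD * ‖p - a j‖ + ‖p - a j‖ ^ 2) :=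
            Finset.sum_le_sum fun p _ => hub p
        _ = 2 * sD * R1 + T := by
            rw [Finset.sum_add_distrib, ← Finset.mul_sum, ← hR1def, ← hTdef]
    have hBWD : |B - W * D| ≤ 2 * sD * Rw + Tw := by
      have heq : ∑ q ∈ Ωj, (w q * pcost q S - w q * D) = B - W * D := by
        rw [Finset.sum_sub_distrib, ← Finset.sum_mul, ← hBdef, ← hWdef]
      calc |B - W * D| = |∑ q ∈ Ωj, (w q * pcost q S - w q * D)| := by rw [heq]
        _ ≤ ∑ q ∈ Ωj, |w q * pcost q S - w q * D| := Finset.abs_sum_le_sum_abs _ _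
        _ ≤ ∑ q ∈ Ωj, w q * (2 * sD * ‖q - a j‖ + ‖q - a j‖ ^ 2) := by
            refine Finset.sum_le_sum fun q hq => ?_
            rw [show w q * pcost q S - w q * D = w q * (pcost q S - D) by ring,
              abs_mul, abs_of_nonneg (hwΩ q hq)]
            exact mul_le_mul_of_nonneg_left (hub q) (hwΩ q hq)
        _ = 2 * sD * Rw + Tw := by
            rw [show (fun q => w q * (2 * sD * ‖q - a j‖ + ‖q - a j‖ ^ 2)) =
              (fun q => 2 * sD * (w q * ‖q - a j‖) + w q * ‖q - a j‖ ^ 2) from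
              funext fun q => by ring]
            rw [Finset.sum_add_distrib, ← Finset.mul_sum, ← hRwdef, ← hTwdef]
    have hWnD : |W * D - n * D| ≤ ε * n * D := by
      rw [show W * D - n * D = (W - n) * D by ring, abs_mul, abs_of_nonneg hD0]
      have : |W - n| ≤ ε * n := by
        rw [abs_le]; constructor <;> [linarith [h1.1]; linarith [h1.2]]
      exact mul_le_mul_of_nonneg_right this hD0
    -- combine
    have htri : |A - B| ≤ (2 * sD * R1 + T) + (ε * n * D) + (2 * sD * Rw + Tw) := by
      have t1 : |A - B| ≤ |A - n * D| + |W * D - n * D| + |B - W * D| := by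
        calc |A - B| = |(A - n * D) + -(W * D - n * D) + -(B - W * D)| := by
              congr 1; ring
          _ ≤ |(A - n * D) + -(W * D - n * D)| + |-(B - W * D)| := abs_add_le _ _
          _ ≤ |A - n * D| + |-(W * D - n * D)| + |-(B - W * D)| := by
              have := abs_add_le (A - n * D) (-(W * D - n * D))
              linarith
          _ = |A - n * D| + |W * D - n * D| + |B - W * D| := by rw [abs_neg, abs_neg]
      linarith [hAnD, hBWD, hWnD]
    have e1 : 2 * sD * R1 ≤ 2 * ε * n * D := by
      calc 2 * sD * R1 ≤ 2 * sD * (ε * n * sD) :=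
            mul_le_mul_of_nonneg_left hR1le (by positivity)
        _ = 2 * ε * n * D := by rw [← hsD2]; ring
    have hεnD0 : 0 ≤ ε * n * D := by positivity
    have e2 : 2 * sD * Rw ≤ 3 * (ε * n * D) := by
      calc 2 * sD * Rw ≤ 2 * sD * ((1 + ε) * ε * n * sD) :=
            mul_le_mul_of_nonneg_left hRwle (by positivity)
        _ = 2 * (1 + ε) * (ε * n * D) := by rw [← hsD2]; ring
        _ ≤ 3 * (ε * n * D) := by
            have h := mul_le_mul_of_nonneg_right hεhalf hεnD0
            linarith
    have hhalf : ε * (ε * n * D) ≤ 1 / 2 * (ε * n * D) :=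
      mul_le_mul_of_nonneg_right hεhalf hεnD0
    have e3 : T ≤ ε * n * D := by linarith [hTle]
    have e4 : Tw ≤ 2 * (ε * n * D) := by
      have hT' : T ≤ 1 / 2 * (ε * n * D) := by linarith [hTle]
      have h2 : (1 + ε) * T ≤ 3 / 2 * (1 / 2 * (ε * n * D)) :=
        mul_le_mul (by linarith) hT' hT0 (by norm_num)
      linarith [hTwle]
    have hfinal : |A - B| ≤ 9 * (ε * n * D) := by linarith
    have hnd4 : ε * (n * D) ≤ ε * (4 * A) :=
      mul_le_mul_of_nonneg_left (by linarith) hε.le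
    have hmul : ε * (n * D / 4) ≤ ε * A := mul_le_mul_of_nonneg_left hA4 hε.le
    calc |A - B| ≤ 9 * (ε * n * D) := hfinal
      _ ≤ 36 * (ε * A) := by linarith
      _ ≤ 40 * ε * A := by linarith [mul_nonneg hε.le hA0]
end
end
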